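/- arXiv:0910.0905 — 2 statements merged into one kernel-verified Lean document; each statement's English description precedes it below -/
import Mathlib

section
/- Let n ≥ 1 and r ≥ 2 be integers. The number N_{n,r}^D of minimally intersecting r-tuples of B_n-partitions without zero-block satisfies N_{n,r}^D = Σ_{j=1}^n N_j^r · 2^{n−j} · s(n, j), where N_j is the number of B_j-partitions without zero-block and s(n, j) denotes the (signed) Stirling number of the first kind, defined by x(x−1)⋯(x−n+1) = Σ_{j=0}^n s(n, j) x^j. -/
open scoped BigOperators

/-- The ground set `[±n] = {±1, …, ±n}`. -/
noncomputable def pmSet (n : ℕ) : Finset ℤ := (Finset.Icc (-(n : ℤ)) n).erase 0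

/-- The block `-B` obtained by negating all elements of `B`. -/
def negBlock (B : Finset ℤ) : Finset ℤ := B.image (fun x => -x)

/-- `π` is a set partition of `[±n]` of type `Bₙ`. -/
def IsBnPartition (n : ℕ) (π : Finset (Finset ℤ)) : Prop :=
  (∀ B ∈ π, B ≠ ∅) ∧ (∀ B ∈ π, B ⊆ pmSet n) ∧
  (∀ x ∈ pmSet n, ∃! B, B ∈ π ∧ x ∈ B) ∧
  (∀ B ∈ π, negBlock B ∈ π) ∧
  (π.filter (fun B => negBlock B = B)).card ≤ 1

/-- The minimal `Bₙ`-partition `0̂ᴮ`, whose blocks are singletons. -/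
noncomputable def botB (n : ℕ) : Finset (Finset ℤ) := (pmSet n).image (fun x => ({x} : Finset ℤ))

/-- Common refinement (meet) of two partitions: all nonempty pairwise intersections. -/
def meetB (π π' : Finset (Finset ℤ)) : Finset (Finset ℤ) :=
  ((π ×ˢ π').image (fun p => p.1 ∩ p.2)).filter (fun B => B ≠ ∅)

/-- `π` and `π'` intersect minimally. -/
def MinInt (n : ℕ) (π π' : Finset (Finset ℤ)) : Prop := meetB π π' = botB n

/-- Common refinement of a family of partitions of `[±n]`. -/
noncomputable def meetFamily (n : ℕ) {r : ℕ} (πs : Fin r → Finset (Finset ℤ)) : Finset (Finset ℤ) :=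
  (List.ofFn πs).foldl meetB {pmSet n}

/-- The family `πs` is minimally intersecting. -/
def MinIntFam (n : ℕ) {r : ℕ} (πs : Fin r → Finset (Finset ℤ)) : Prop :=
  meetFamily n πs = botB n

/-- `π` has a zero-block of half-size `i₀` (with `i₀ = 0` meaning no zero-block). -/
def zeroBlockHalfSize (π : Finset (Finset ℤ)) (i₀ : ℕ) : Prop :=
  ((π.filter (fun B => negBlock B = B)).sum Finset.card) = 2 * i₀

/-- The block pairs of `π` have sizes `i 0, …, i (k-1)`, listed in any order:
the multiset of sizes of non-zero-blocks is the double of the multiset of the `i α`. -/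
def blockPairSizes (π : Finset (Finset ℤ)) {k : ℕ} (i : Fin k → ℕ) : Prop :=
  ((π.filter (fun B => negBlock B ≠ B)).val.map Finset.card)
    = ((List.ofFn i : List ℕ) : Multiset ℕ) + ((List.ofFn i : List ℕ) : Multiset ℕ)

/-- `π` has exactly `l` block pairs. -/
def numBlockPairs (π : Finset (Finset ℤ)) (l : ℕ) : Prop :=
  (π.filter (fun B => negBlock B ≠ B)).card = 2 * l

/-- `π` has no zero-block. -/
def NoZeroBlock (π : Finset (Finset ℤ)) : Prop := ∀ B ∈ π, negBlock B ≠ B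

/-- Falling factorial `(x)ₙ = x (x-1) ⋯ (x-n+1)` of a real number. -/
noncomputable def ffall (x : ℝ) (n : ℕ) : ℝ := ∏ i ∈ Finset.range n, (x - i)

/-- Signed Stirling number of the first kind `s(n,j)`, defined by
`x(x-1)⋯(x-n+1) = Σ_j s(n,j) xʲ`. -/
noncomputable def stirling1 (n j : ℕ) : ℤ :=
  (∏ i ∈ Finset.range n, (Polynomial.X - Polynomial.C (i : ℤ))).coeff j

namespace Wilf

open Finset

/-! ### negBlock basics -/

@[simp] lemma mem_negBlock {B : Finset ℤ} {x : ℤ} : x ∈ negBlock B ↔ -x ∈ B := by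
  simp only [negBlock, mem_image]
  constructor
  · rintro ⟨y, hy, rfl⟩; simpa using hy
  · intro h; exact ⟨-x, h, by ring⟩

@[simp] lemma negBlock_negBlock (B : Finset ℤ) : negBlock (negBlock B) = B := by
  ext x; simp

lemma negBlock_inter (B C : Finset ℤ) : negBlock (B ∩ C) = negBlock B ∩ negBlock C := by
  ext x; simp

@[simp] lemma negBlock_empty : negBlock (∅ : Finset ℤ) = ∅ := rfl

@[simp] lemma negBlock_eq_empty {B : Finset ℤ} : negBlock B = ∅ ↔ B = ∅ := by
  constructor
  · intro h; by_contra hB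
    obtain ⟨x, hx⟩ := Finset.nonempty_iff_ne_empty.2 hB
    have : -x ∈ negBlock B := by simp [hx]
    simp [h] at this
  · rintro rfl; rfl

@[simp] lemma negBlock_singleton (x : ℤ) : negBlock ({x} : Finset ℤ) = {-x} := by
  ext y; simp only [mem_negBlock, Finset.mem_singleton]; omega

/-! ### Symmetric ground sets -/

def Sym (G : Finset ℤ) : Prop := 0 ∉ G ∧ ∀ x ∈ G, -x ∈ G

lemma Sym.neg_mem_iff {G : Finset ℤ} (hG : Sym G) {x : ℤ} : -x ∈ G ↔ x ∈ G :=
  ⟨fun h => by simpa using hG.2 _ h, hG.2 x⟩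

@[simp] lemma mem_pmSet {n : ℕ} {x : ℤ} :
    x ∈ pmSet n ↔ x ≠ 0 ∧ -(n : ℤ) ≤ x ∧ x ≤ n := by
  simp [pmSet, and_assoc]

lemma sym_pmSet (n : ℕ) : Sym (pmSet n) := by
  constructor
  · simp
  · intro x hx; simp only [mem_pmSet] at hx ⊢
    refine ⟨by simpa using hx.1, by omega, by omega⟩

lemma Sym.negBlock_subset {G B : Finset ℤ} (hG : Sym G) (hB : B ⊆ G) : negBlock B ⊆ G := by
  intro x hx
  rw [mem_negBlock] at hx
  simpa using hG.2 _ (hB hx)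

/-! ### Partitions -/

structure IsPart (G : Finset ℤ) (π : Finset (Finset ℤ)) : Prop where
  subset : ∀ B ∈ π, B ⊆ G
  nonempty : ∀ B ∈ π, B.Nonempty
  exu : ∀ x ∈ G, ∃! B, B ∈ π ∧ x ∈ B
  neg : ∀ B ∈ π, negBlock B ∈ π
  nz : ∀ B ∈ π, negBlock B ≠ B

lemma IsPart.eq_of_mem {G : Finset ℤ} {π : Finset (Finset ℤ)} (h : IsPart G π)
    {B C : Finset ℤ} {x : ℤ} (hB : B ∈ π) (hC : C ∈ π) (hxB : x ∈ B) (hxC : x ∈ C) :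
    B = C := by
  obtain ⟨D, _, huniq⟩ := h.exu x (h.subset B hB hxB)
  rw [huniq B ⟨hB, hxB⟩, huniq C ⟨hC, hxC⟩]

lemma IsPart.not_neg_mem {G : Finset ℤ} {π : Finset (Finset ℤ)} (h : IsPart G π)
    {B : Finset ℤ} {x : ℤ} (hB : B ∈ π) (hxB : x ∈ B) : -x ∉ B := by
  intro hxB'
  have h1 : x ∈ negBlock B := by simpa using hxB'
  exact h.nz B hB (h.eq_of_mem (h.neg B hB) hB h1 hxB)

/-! ### The relation of a partition -/

def Rel (π : Finset (Finset ℤ)) (x y : ℤ) : Prop := ∃ B ∈ π, x ∈ B ∧ y ∈ B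

lemma IsPart.rel_iff {G : Finset ℤ} {π : Finset (Finset ℤ)} (h : IsPart G π)
    {B : Finset ℤ} {x y : ℤ} (hB : B ∈ π) (hxB : x ∈ B) : Rel π x y ↔ y ∈ B := by
  constructor
  · rintro ⟨C, hC, hxC, hyC⟩
    rwa [h.eq_of_mem hB hC hxB hxC]
  · intro hy; exact ⟨B, hB, hxB, hy⟩

lemma IsPart.rel_refl {G : Finset ℤ} {π : Finset (Finset ℤ)} (h : IsPart G π)
    {x : ℤ} (hx : x ∈ G) : Rel π x x := by
  obtain ⟨B, ⟨hB, hxB⟩, _⟩ := h.exu x hx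
  exact ⟨B, hB, hxB, hxB⟩

lemma Rel.symm {π : Finset (Finset ℤ)} {x y : ℤ} (h : Rel π x y) : Rel π y x := by
  obtain ⟨B, hB, h1, h2⟩ := h; exact ⟨B, hB, h2, h1⟩

lemma rel_mem_left {G : Finset ℤ} {π : Finset (Finset ℤ)} (h : IsPart G π) {x y : ℤ}
    (hr : Rel π x y) : x ∈ G := by
  obtain ⟨B, hB, h1, _⟩ := hr; exact h.subset B hB h1

lemma rel_mem_right {G : Finset ℤ} {π : Finset (Finset ℤ)} (h : IsPart G π) {x y : ℤ}
    (hr : Rel π x y) : y ∈ G := rel_mem_left h hr.symm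

/-- A partition is determined by its relation. -/
lemma IsPart.eq_of_rel {G : Finset ℤ} {π π' : Finset (Finset ℤ)} (h : IsPart G π)
    (h' : IsPart G π') (hrel : ∀ x y, Rel π x y ↔ Rel π' x y) : π = π' := by
  have key : ∀ (σ σ' : Finset (Finset ℤ)), IsPart G σ → IsPart G σ' →
      (∀ x y, Rel σ x y ↔ Rel σ' x y) → σ ⊆ σ' := by
    intro σ σ' hσ hσ' hr B hB
    obtain ⟨x, hxB⟩ := hσ.nonempty B hB
    obtain ⟨B', ⟨hB', hxB'⟩, _⟩ := hσ'.exu x (hσ.subset B hB hxB)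
    have : B = B' := by
      ext y
      rw [← hσ.rel_iff hB hxB, ← hσ'.rel_iff hB' hxB', hr]
    rwa [this]
  exact Finset.Subset.antisymm (key _ _ h h' hrel)
    (key _ _ h' h (fun x y => (hrel x y).symm))

/-! ### botG : the minimal partition -/

def botG (G : Finset ℤ) : Finset (Finset ℤ) := G.image (fun x => ({x} : Finset ℤ))

lemma botB_eq (n : ℕ) : botB n = botG (pmSet n) := rfl

@[simp] lemma mem_botG {G : Finset ℤ} {B : Finset ℤ} :
    B ∈ botG G ↔ ∃ x ∈ G, B = {x} := by
  simp [botG, eq_comm]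

lemma isPart_botG {G : Finset ℤ} (hG : Sym G) : IsPart G (botG G) := by
  constructor
  · intro B hB; rw [mem_botG] at hB; obtain ⟨x, hx, rfl⟩ := hB; simpa
  · intro B hB; rw [mem_botG] at hB; obtain ⟨x, _, rfl⟩ := hB; simp
  · intro x hx
    refine ⟨{x}, ⟨mem_botG.2 ⟨x, hx, rfl⟩, by simp⟩, ?_⟩
    rintro B ⟨hB, hxB⟩
    rw [mem_botG] at hB; obtain ⟨y, _, rfl⟩ := hB
    simp at hxB; simp [hxB]
  · intro B hB; rw [mem_botG] at hB; obtain ⟨x, hx, rfl⟩ := hB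
    rw [negBlock_singleton, mem_botG]
    exact ⟨-x, hG.2 x hx, rfl⟩
  · intro B hB hc; rw [mem_botG] at hB; obtain ⟨x, hx, rfl⟩ := hB
    rw [negBlock_singleton] at hc
    have : -x = x := by simpa using hc
    have : x = 0 := by omega
    exact hG.1 (this ▸ hx)

lemma rel_botG {G : Finset ℤ} {x y : ℤ} : Rel (botG G) x y ↔ x ∈ G ∧ x = y := by
  constructor
  · rintro ⟨B, hB, h1, h2⟩
    rw [mem_botG] at hB; obtain ⟨z, hz, rfl⟩ := hB
    simp at h1 h2; subst h1; subst h2; exact ⟨hz, rfl⟩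
  · rintro ⟨hx, rfl⟩
    exact ⟨{x}, mem_botG.2 ⟨x, hx, rfl⟩, by simp⟩

/-! ### meetB -/

lemma mem_meetB' {π π' : Finset (Finset ℤ)} {C : Finset ℤ} :
    C ∈ meetB π π' ↔ C.Nonempty ∧ ∃ B₁ ∈ π, ∃ B₂ ∈ π', C = B₁ ∩ B₂ := by
  simp only [meetB, Finset.mem_filter, Finset.mem_image, Finset.mem_product, Prod.exists]
  rw [← Finset.nonempty_iff_ne_empty, and_comm]
  constructor
  · rintro ⟨h1, B₁, B₂, ⟨m1, m2⟩, rfl⟩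
    exact ⟨h1, B₁, m1, B₂, m2, rfl⟩
  · rintro ⟨h1, B₁, m1, B₂, m2, rfl⟩
    exact ⟨h1, B₁, B₂, ⟨m1, m2⟩, rfl⟩

lemma isPart_meetB {G : Finset ℤ} {π π' : Finset (Finset ℤ)}
    (h : IsPart G π) (h' : IsPart G π') : IsPart G (meetB π π') := by
  constructor
  · intro C hC; rw [mem_meetB'] at hC
    obtain ⟨_, B₁, hB₁, B₂, hB₂, rfl⟩ := hC
    exact fun x hx => h.subset B₁ hB₁ (Finset.mem_inter.1 hx).1
  · intro C hC; exact (mem_meetB'.1 hC).1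
  · intro x hx
    obtain ⟨B₁, ⟨hB₁, hxB₁⟩, u₁⟩ := h.exu x hx
    obtain ⟨B₂, ⟨hB₂, hxB₂⟩, u₂⟩ := h'.exu x hx
    refine ⟨B₁ ∩ B₂, ⟨mem_meetB'.2 ⟨⟨x, by simp [hxB₁, hxB₂]⟩, B₁, hB₁, B₂, hB₂, rfl⟩,
      by simp [hxB₁, hxB₂]⟩, ?_⟩
    rintro C ⟨hC, hxC⟩
    rw [mem_meetB'] at hC
    obtain ⟨_, C₁, hC₁, C₂, hC₂, rfl⟩ := hC
    simp only [Finset.mem_inter] at hxC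
    rw [u₁ C₁ ⟨hC₁, hxC.1⟩, u₂ C₂ ⟨hC₂, hxC.2⟩]
  · intro C hC; rw [mem_meetB'] at hC
    obtain ⟨hne, B₁, hB₁, B₂, hB₂, rfl⟩ := hC
    rw [negBlock_inter, mem_meetB']
    refine ⟨?_, negBlock B₁, h.neg B₁ hB₁, negBlock B₂, h'.neg B₂ hB₂, rfl⟩
    rw [← negBlock_inter]
    obtain ⟨x, hx⟩ := hne
    exact ⟨-x, by simpa using hx⟩
  · intro C hC hcon; rw [mem_meetB'] at hC
    obtain ⟨hne, B₁, hB₁, B₂, hB₂, rfl⟩ := hC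
    obtain ⟨x, hx⟩ := hne
    have hx' : -x ∈ B₁ ∩ B₂ := by
      have : -x ∈ negBlock (B₁ ∩ B₂) := by simpa using hx
      rwa [hcon] at this
    exact h.not_neg_mem hB₁ (Finset.mem_inter.1 hx).1 (Finset.mem_inter.1 hx').1

lemma rel_meetB {π π' : Finset (Finset ℤ)} {x y : ℤ} :
    Rel (meetB π π') x y ↔ Rel π x y ∧ Rel π' x y := by
  constructor
  · rintro ⟨C, hC, h1, h2⟩
    rw [mem_meetB'] at hC
    obtain ⟨_, B₁, hB₁, B₂, hB₂, rfl⟩ := hC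
    simp only [Finset.mem_inter] at h1 h2
    exact ⟨⟨B₁, hB₁, h1.1, h2.1⟩, ⟨B₂, hB₂, h1.2, h2.2⟩⟩
  · rintro ⟨⟨B₁, hB₁, hx₁, hy₁⟩, ⟨B₂, hB₂, hx₂, hy₂⟩⟩
    exact ⟨B₁ ∩ B₂, mem_meetB'.2 ⟨⟨x, by simp [hx₁, hx₂]⟩, B₁, hB₁, B₂, hB₂, rfl⟩,
      by simp [hx₁, hx₂, hy₁, hy₂]⟩

lemma meetB_top {G : Finset ℤ} {π : Finset (Finset ℤ)} (h : IsPart G π) :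
    meetB {G} π = π := by
  ext C
  rw [mem_meetB']
  constructor
  · rintro ⟨hne, B₁, hB₁, B₂, hB₂, rfl⟩
    simp only [Finset.mem_singleton] at hB₁; subst hB₁
    rwa [Finset.inter_eq_right.2 (h.subset B₂ hB₂)]
  · intro hC
    exact ⟨h.nonempty C hC, G, by simp, C, hC, (Finset.inter_eq_right.2 (h.subset C hC)).symm⟩

/-! ### foldl meets -/

lemma foldl_meetB {G : Finset ℤ} :
    ∀ (l : List (Finset (Finset ℤ))) (acc : Finset (Finset ℤ)), IsPart G acc →
      (∀ π ∈ l, IsPart G π) →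
      IsPart G (l.foldl meetB acc) ∧
        (∀ x y, Rel (l.foldl meetB acc) x y ↔ Rel acc x y ∧ ∀ π ∈ l, Rel π x y) := by
  intro l
  induction l with
  | nil => intro acc hacc _; exact ⟨hacc, by simp⟩
  | cons π l ih =>
    intro acc hacc hl
    have hπ : IsPart G π := hl π (by simp)
    have hmeet : IsPart G (meetB acc π) := isPart_meetB hacc hπ
    obtain ⟨h1, h2⟩ := ih (meetB acc π) hmeet (fun π' hπ' => hl π' (by simp [hπ']))
    refine ⟨by simpa using h1, fun x y => ?_⟩
    simp only [List.foldl_cons]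
    rw [h2 x y, rel_meetB]
    simp only [List.mem_cons]
    constructor
    · rintro ⟨⟨ha, hb⟩, hc⟩
      exact ⟨ha, fun π' hπ' => hπ'.elim (fun h => h ▸ hb) (hc π')⟩
    · rintro ⟨ha, hb⟩
      exact ⟨⟨ha, hb π (Or.inl rfl)⟩, fun π' h => hb π' (Or.inr h)⟩

def meetFam (G : Finset ℤ) {r : ℕ} (πs : Fin r → Finset (Finset ℤ)) : Finset (Finset ℤ) :=
  (List.ofFn πs).foldl meetB {G}

lemma meetFamily_eq (n : ℕ) {r : ℕ} (πs : Fin r → Finset (Finset ℤ)) :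
    meetFamily n πs = meetFam (pmSet n) πs := rfl

lemma meetFam_succ {G : Finset ℤ} {r : ℕ} (πs : Fin (r + 1) → Finset (Finset ℤ))
    (h0 : IsPart G (πs 0)) :
    meetFam G πs = (List.ofFn (fun i : Fin r => πs i.succ)).foldl meetB (πs 0) := by
  rw [meetFam, List.ofFn_succ, List.foldl_cons, meetB_top h0]

lemma isPart_meetFam {G : Finset ℤ} {r : ℕ} (hr : 1 ≤ r) {πs : Fin r → Finset (Finset ℤ)}
    (h : ∀ t, IsPart G (πs t)) : IsPart G (meetFam G πs) := by
  obtain ⟨r', rfl⟩ : ∃ r', r = r' + 1 := ⟨r - 1, by omega⟩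
  rw [meetFam_succ πs (h 0)]
  exact (foldl_meetB _ _ (h 0) (by simp only [List.mem_ofFn]; rintro π ⟨i, rfl⟩; exact h _)).1

lemma rel_meetFam {G : Finset ℤ} {r : ℕ} (hr : 1 ≤ r) {πs : Fin r → Finset (Finset ℤ)}
    (h : ∀ t, IsPart G (πs t)) {x y : ℤ} :
    Rel (meetFam G πs) x y ↔ ∀ t, Rel (πs t) x y := by
  obtain ⟨r', rfl⟩ : ∃ r', r = r' + 1 := ⟨r - 1, by omega⟩
  rw [meetFam_succ πs (h 0)]
  rw [(foldl_meetB _ _ (h 0) (by simp only [List.mem_ofFn]; rintro π ⟨i, rfl⟩; exact h _)).2]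
  simp only [List.mem_ofFn]
  constructor
  · rintro ⟨h0, hs⟩ t
    rcases Fin.eq_zero_or_eq_succ t with rfl | ⟨i, rfl⟩
    · exact h0
    · exact hs _ ⟨i, rfl⟩
  · rintro ha
    exact ⟨ha 0, by rintro π ⟨i, rfl⟩; exact ha _⟩

lemma meetFam_eq_botG_iff {G : Finset ℤ} (hG : Sym G) {r : ℕ} (hr : 1 ≤ r)
    {πs : Fin r → Finset (Finset ℤ)} (h : ∀ t, IsPart G (πs t)) :
    meetFam G πs = botG G ↔ ∀ x ∈ G, ∀ y, (∀ t, Rel (πs t) x y) → x = y := by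
  obtain ⟨r', rfl⟩ : ∃ r', r = r' + 1 := ⟨r - 1, by omega⟩
  constructor
  · intro heq x hx y hrel
    have : Rel (meetFam G πs) x y := (rel_meetFam hr h).2 hrel
    rw [heq, rel_botG] at this
    exact this.2
  · intro hkey
    apply (isPart_meetFam hr h).eq_of_rel (isPart_botG hG)
    intro x y
    rw [rel_botG, rel_meetFam hr h]
    constructor
    · intro hrel
      have hx : x ∈ G := rel_mem_left (h 0) (hrel 0)
      exact ⟨hx, hkey x hx y hrel⟩
    · rintro ⟨hx, rfl⟩
      intro t; exact (h t).rel_refl hx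

end Wilf

namespace Wilf
open Finset
open scoped Classical

/-! ### Counting definitions -/

noncomputable def parts (G : Finset ℤ) : Finset (Finset (Finset ℤ)) :=
  G.powerset.powerset.filter (fun π => IsPart G π)

lemma mem_parts {G : Finset ℤ} {π : Finset (Finset ℤ)} : π ∈ parts G ↔ IsPart G π := by
  simp only [parts, Finset.mem_filter, Finset.mem_powerset, and_iff_right_iff_imp]
  intro h B hB
  simpa using h.subset B hB

noncomputable def tuples (G : Finset ℤ) (r : ℕ) : Finset (Fin r → Finset (Finset ℤ)) :=
  (Fintype.piFinset fun _ => parts G).filter (fun πs => meetFam G πs = botG G)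

lemma mem_tuples {G : Finset ℤ} {r : ℕ} {πs : Fin r → Finset (Finset ℤ)} :
    πs ∈ tuples G r ↔ (∀ t, IsPart G (πs t)) ∧ meetFam G πs = botG G := by
  simp [tuples, Fintype.mem_piFinset, mem_parts]

noncomputable def Ncnt (G : Finset ℤ) : ℕ := (parts G).card
noncomputable def Lcnt (G : Finset ℤ) (r : ℕ) : ℕ := (tuples G r).card

/-! ### Transport along odd bijections -/

structure OddEquiv (G G' : Finset ℤ) (f g : ℤ → ℤ) : Prop where
  symG : Sym G
  symG' : Sym G'
  mapsf : ∀ x ∈ G, f x ∈ G'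
  mapsg : ∀ y ∈ G', g y ∈ G
  gf : ∀ x ∈ G, g (f x) = x
  fg : ∀ y ∈ G', f (g y) = y
  oddf : ∀ x ∈ G, f (-x) = -f x

namespace OddEquiv

variable {G G' : Finset ℤ} {f g : ℤ → ℤ}

lemma symmEquiv (e : OddEquiv G G' f g) : OddEquiv G' G g f where
  symG := e.symG'
  symG' := e.symG
  mapsf := e.mapsg
  mapsg := e.mapsf
  gf := e.fg
  fg := e.gf
  oddf := by
    intro y hy
    have h1 : g y ∈ G := e.mapsg y hy
    have h2 : -g y ∈ G := e.symG.2 _ h1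
    have : f (-g y) = -f (g y) := e.oddf _ h1
    rw [e.fg y hy] at this
    have h3 : -y ∈ G' := e.symG'.2 _ hy
    calc g (-y) = g (-(f (g y))) := by rw [e.fg y hy]
    _ = g (f (-g y)) := by rw [e.oddf _ h1]
    _ = -g y := e.gf _ h2

lemma injOn (e : OddEquiv G G' f g) : Set.InjOn f G := fun x hx y hy hxy => by
  rw [← e.gf x hx, ← e.gf y hy, hxy]

lemma image_eq (e : OddEquiv G G' f g) : G.image f = G' := by
  apply Finset.Subset.antisymm
  · intro y hy
    obtain ⟨x, hx, rfl⟩ := Finset.mem_image.1 hy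
    exact e.mapsf x hx
  · intro y hy
    exact Finset.mem_image.2 ⟨g y, e.mapsg y hy, e.fg y hy⟩

lemma image_image (e : OddEquiv G G' f g) {B : Finset ℤ} (hB : B ⊆ G) : (B.image f).image g = B := by
  ext x
  simp only [Finset.mem_image]
  constructor
  · rintro ⟨y, ⟨z, hz, rfl⟩, rfl⟩
    rwa [e.gf z (hB hz)]
  · intro hx
    exact ⟨f x, ⟨x, hx, rfl⟩, e.gf x (hB hx)⟩

lemma image_inter (e : OddEquiv G G' f g) {B C : Finset ℤ} (hB : B ⊆ G) (hC : C ⊆ G) :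
    (B ∩ C).image f = B.image f ∩ C.image f := by
  refine Finset.image_inter_of_injOn _ _ (e.injOn.mono ?_)
  rintro x (hx | hx)
  exacts [hB hx, hC hx]

lemma image_negBlock (e : OddEquiv G G' f g) {B : Finset ℤ} (hB : B ⊆ G) :
    (negBlock B).image f = negBlock (B.image f) := by
  ext y
  simp only [Finset.mem_image, mem_negBlock]
  constructor
  · rintro ⟨x, hx, rfl⟩
    have hxG : x ∈ G := e.symG.neg_mem_iff.1 (hB hx)
    exact ⟨-x, hx, by rw [e.oddf x hxG]⟩
  · rintro ⟨x, hx, hfx⟩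
    have hxG : x ∈ G := hB hx
    refine ⟨-x, by simpa using hx, ?_⟩
    rw [e.oddf x hxG, hfx, neg_neg]

/-- Transport of a partition. -/
lemma isPart_map (e : OddEquiv G G' f g) {π : Finset (Finset ℤ)} (h : IsPart G π) :
    IsPart G' (π.image (Finset.image f)) := by
  have hsub : ∀ B ∈ π, B ⊆ G := h.subset
  constructor
  · intro C hC
    obtain ⟨B, hB, rfl⟩ := Finset.mem_image.1 hC
    intro y hy
    obtain ⟨x, hx, rfl⟩ := Finset.mem_image.1 hy
    exact e.mapsf x (hsub B hB hx)
  · intro C hC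
    obtain ⟨B, hB, rfl⟩ := Finset.mem_image.1 hC
    exact (h.nonempty B hB).image f
  · intro y hy
    obtain ⟨B, ⟨hB, hxB⟩, hu⟩ := h.exu (g y) (e.mapsg y hy)
    refine ⟨B.image f, ⟨Finset.mem_image_of_mem _ hB, ?_⟩, ?_⟩
    · exact Finset.mem_image.2 ⟨g y, hxB, e.fg y hy⟩
    · rintro C ⟨hC, hyC⟩
      obtain ⟨B', hB', rfl⟩ := Finset.mem_image.1 hC
      obtain ⟨x, hx, hfx⟩ := Finset.mem_image.1 hyC
      have hgx : x = g y := by rw [← hfx, e.gf x (hsub B' hB' hx)]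
      rw [hu B' ⟨hB', hgx ▸ hx⟩]
  · intro C hC
    obtain ⟨B, hB, rfl⟩ := Finset.mem_image.1 hC
    rw [← e.image_negBlock (hsub B hB)]
    exact Finset.mem_image_of_mem _ (h.neg B hB)
  · intro C hC hcon
    obtain ⟨B, hB, rfl⟩ := Finset.mem_image.1 hC
    rw [← e.image_negBlock (hsub B hB)] at hcon
    have h1 := e.image_image (hsub B hB)
    have h2 := e.image_image (e.symG.negBlock_subset (hsub B hB))
    exact h.nz B hB (by rw [← h2, hcon, h1])

lemma map_botG (e : OddEquiv G G' f g) : (botG G).image (Finset.image f) = botG G' := by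
  rw [← e.image_eq]
  ext C
  simp only [mem_botG, Finset.mem_image]
  constructor
  · rintro ⟨B, ⟨x, hx, rfl⟩, rfl⟩
    exact ⟨f x, ⟨x, hx, rfl⟩, by simp⟩
  · rintro ⟨y, ⟨x, hx, rfl⟩, rfl⟩
    exact ⟨{x}, ⟨x, hx, rfl⟩, by simp⟩

lemma map_meetB (e : OddEquiv G G' f g) {π π' : Finset (Finset ℤ)} (h : IsPart G π) (h' : IsPart G π') :
    (meetB π π').image (Finset.image f) = meetB (π.image (Finset.image f)) (π'.image (Finset.image f)) := by
  ext C
  constructor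
  · intro hC
    obtain ⟨D, hD, rfl⟩ := Finset.mem_image.1 hC
    obtain ⟨hne, B₁, hB₁, B₂, hB₂, rfl⟩ := mem_meetB'.1 hD
    exact mem_meetB'.2 ⟨hne.image f, B₁.image f, Finset.mem_image_of_mem _ hB₁,
      B₂.image f, Finset.mem_image_of_mem _ hB₂,
      e.image_inter (h.subset B₁ hB₁) (h'.subset B₂ hB₂)⟩
  · intro hC
    obtain ⟨hne, C₁, hC₁, C₂, hC₂, rfl⟩ := mem_meetB'.1 hC
    obtain ⟨B₁, hB₁, rfl⟩ := Finset.mem_image.1 hC₁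
    obtain ⟨B₂, hB₂, rfl⟩ := Finset.mem_image.1 hC₂
    rw [← e.image_inter (h.subset B₁ hB₁) (h'.subset B₂ hB₂)] at hne ⊢
    have hne' : (B₁ ∩ B₂).Nonempty := by
      obtain ⟨y, hy⟩ := hne
      obtain ⟨x, hx, _⟩ := Finset.mem_image.1 hy
      exact ⟨x, hx⟩
    exact Finset.mem_image_of_mem _ (mem_meetB'.2 ⟨hne', B₁, hB₁, B₂, hB₂, rfl⟩)

lemma map_meetFam (e : OddEquiv G G' f g) {r : ℕ} (hr : 1 ≤ r) {πs : Fin r → Finset (Finset ℤ)}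
    (h : ∀ t, IsPart G (πs t)) :
    (meetFam G πs).image (Finset.image f) = meetFam G' (fun t => (πs t).image (Finset.image f)) := by
  obtain ⟨r', rfl⟩ : ∃ r', r = r' + 1 := ⟨r - 1, by omega⟩
  rw [meetFam_succ πs (h 0), meetFam_succ _ (e.isPart_map (h 0))]
  have : ∀ (l : List (Finset (Finset ℤ))) (acc : Finset (Finset ℤ)), IsPart G acc →
      (∀ π ∈ l, IsPart G π) →
      (l.foldl meetB acc).image (Finset.image f)
        = (l.map (Finset.image (Finset.image f))).foldl meetB (acc.image (Finset.image f)) := by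
    intro l
    induction l with
    | nil => intro acc _ _; simp
    | cons π l ih =>
      intro acc hacc hl
      simp only [List.foldl_cons, List.map_cons]
      rw [← e.map_meetB hacc (hl π (by simp))]
      exact ih _ (isPart_meetB hacc (hl π (by simp))) (fun π' h' => hl π' (by simp [h']))
  rw [this _ _ (h 0) (by simp only [List.mem_ofFn]; rintro π ⟨i, rfl⟩; exact h _)]
  congr 1
  rw [List.map_ofFn]
  rfl

lemma map_mem_parts (e : OddEquiv G G' f g) {π : Finset (Finset ℤ)} (hπ : π ∈ parts G) :
    π.image (Finset.image f) ∈ parts G' :=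
  mem_parts.2 (e.isPart_map (mem_parts.1 hπ))

lemma map_map (e : OddEquiv G G' f g) {π : Finset (Finset ℤ)} (h : IsPart G π) :
    (π.image (Finset.image f)).image (Finset.image g) = π := by
  ext B
  simp only [Finset.mem_image]
  constructor
  · rintro ⟨C, ⟨B', hB', rfl⟩, rfl⟩
    rwa [e.image_image (h.subset B' hB')]
  · intro hB
    exact ⟨B.image f, ⟨B, hB, rfl⟩, e.image_image (h.subset B hB)⟩

lemma ncnt_eq (e : OddEquiv G G' f g) : Ncnt G = Ncnt G' := by
  apply Finset.card_bij' (fun π _ => π.image (Finset.image f))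
    (fun π _ => π.image (Finset.image g))
  · intro π hπ; exact e.map_map (mem_parts.1 hπ)
  · intro π hπ; exact e.symmEquiv.map_map (mem_parts.1 hπ)
  · intro π hπ; exact e.map_mem_parts hπ
  · intro π hπ; exact e.symmEquiv.map_mem_parts hπ

lemma lcnt_eq (e : OddEquiv G G' f g) {r : ℕ} (hr : 1 ≤ r) : Lcnt G r = Lcnt G' r := by
  apply Finset.card_bij' (fun πs _ => fun t => (πs t).image (Finset.image f))
    (fun πs _ => fun t => (πs t).image (Finset.image g))
  · intro πs hπs
    funext t
    exact e.map_map ((mem_tuples.1 hπs).1 t)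
  · intro πs hπs
    funext t
    exact e.symmEquiv.map_map ((mem_tuples.1 hπs).1 t)
  · intro πs hπs
    rw [mem_tuples] at hπs ⊢
    refine ⟨fun t => e.isPart_map (hπs.1 t), ?_⟩
    rw [← e.map_meetFam hr hπs.1, hπs.2, e.map_botG]
  · intro πs hπs
    rw [mem_tuples] at hπs ⊢
    refine ⟨fun t => e.symmEquiv.isPart_map (hπs.1 t), ?_⟩
    rw [← e.symmEquiv.map_meetFam hr hπs.1, hπs.2, e.symmEquiv.map_botG]

end OddEquiv

end Wilf
namespace Wilf
open Finset
open scoped Classical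

/-! ### Positive parts and relabeling -/

def posPart (G : Finset ℤ) : Finset ℤ := G.filter (fun x => 0 < x)

lemma mem_posPart {G : Finset ℤ} {x : ℤ} : x ∈ posPart G ↔ x ∈ G ∧ 0 < x := Finset.mem_filter

lemma Sym.mem_cases {G : Finset ℤ} (hG : Sym G) {x : ℤ} (hx : x ∈ G) :
    x ∈ posPart G ∨ -x ∈ posPart G := by
  rcases lt_trichotomy 0 x with h | h | h
  · exact Or.inl (mem_posPart.2 ⟨hx, h⟩)
  · exact absurd (h ▸ hx) hG.1
  · exact Or.inr (mem_posPart.2 ⟨hG.2 x hx, by omega⟩)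

lemma card_eq_two_mul_posPart {G : Finset ℤ} (hG : Sym G) :
    G.card = 2 * (posPart G).card := by
  have hsplit : G = posPart G ∪ (G.filter (fun x => x < 0)) := by
    ext x
    simp only [Finset.mem_union, mem_posPart, Finset.mem_filter]
    constructor
    · intro hx
      rcases lt_trichotomy 0 x with h | h | h
      · exact Or.inl ⟨hx, h⟩
      · exact absurd (h ▸ hx) hG.1
      · exact Or.inr ⟨hx, h⟩
    · rintro (⟨h, _⟩ | ⟨h, _⟩) <;> exact h
  have hneg : G.filter (fun x => x < 0) = (posPart G).image (fun x => -x) := by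
    ext x
    simp only [Finset.mem_filter, Finset.mem_image, mem_posPart]
    constructor
    · intro ⟨hx, hlt⟩
      exact ⟨-x, ⟨hG.2 x hx, by omega⟩, by ring⟩
    · rintro ⟨y, ⟨hy, hpos⟩, rfl⟩
      exact ⟨hG.2 y hy, by omega⟩
  have hdisj : Disjoint (posPart G) (G.filter (fun x => x < 0)) := by
    rw [Finset.disjoint_left]
    intro x h1 h2
    rw [mem_posPart] at h1
    rw [Finset.mem_filter] at h2
    omega
  have hcard : (G.filter (fun x => x < 0)).card = (posPart G).card := by
    rw [hneg]
    exact Finset.card_image_of_injOn (fun a _ b _ h => neg_injective h)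
  have : G.card = (posPart G).card + (G.filter (fun x => x < 0)).card := by
    conv_lhs => rw [hsplit]
    rw [Finset.card_union_of_disjoint hdisj]
  omega

lemma posPart_pmSet (k : ℕ) : posPart (pmSet k) = Finset.Icc 1 (k : ℤ) := by
  ext x
  simp only [mem_posPart, mem_pmSet, Finset.mem_Icc]
  omega

lemma card_posPart_pmSet (k : ℕ) : (posPart (pmSet k)).card = k := by
  rw [posPart_pmSet]
  rw [Int.card_Icc]
  simp

lemma card_pmSet (k : ℕ) : (pmSet k).card = 2 * k := by
  rw [card_eq_two_mul_posPart (sym_pmSet k), card_posPart_pmSet]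

lemma exists_oddEquiv {G : Finset ℤ} (hG : Sym G) {k : ℕ} (hk : G.card = 2 * k) :
    ∃ f g, OddEquiv G (pmSet k) f g := by
  have hpos : (posPart G).card = (posPart (pmSet k)).card := by
    have := card_eq_two_mul_posPart hG
    rw [card_posPart_pmSet]
    omega
  set P := posPart G with hP
  set Q := posPart (pmSet k) with hQ
  let e := Finset.equivOfCardEq hpos
  have hPpos : ∀ x ∈ P, 0 < x := fun x hx => (mem_posPart.1 hx).2
  have hQpos : ∀ x ∈ Q, 0 < x := fun x hx => (mem_posPart.1 hx).2
  have hPsub : ∀ x ∈ P, x ∈ G := fun x hx => (mem_posPart.1 hx).1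
  have hQsub : ∀ x ∈ Q, x ∈ pmSet k := fun x hx => (mem_posPart.1 hx).1
  let f : ℤ → ℤ := fun x =>
    if hx : x ∈ P then (e ⟨x, hx⟩ : ℤ) else if hx' : -x ∈ P then -((e ⟨-x, hx'⟩ : ℤ)) else x
  let g : ℤ → ℤ := fun y =>
    if hy : y ∈ Q then (e.symm ⟨y, hy⟩ : ℤ)
    else if hy' : -y ∈ Q then -((e.symm ⟨-y, hy'⟩ : ℤ)) else y
  have fpos : ∀ (x : ℤ) (hx : x ∈ P), f x = (e ⟨x, hx⟩ : ℤ) := by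
    intro x hx; simp only [f, dif_pos hx]
  have fneg : ∀ (x : ℤ) (hx : -x ∈ P), f x = -((e ⟨-x, hx⟩ : ℤ)) := by
    intro x hx
    have : x ∉ P := fun hc => by have := hPpos x hc; have := hPpos _ hx; omega
    simp only [f, dif_neg this, dif_pos hx]
  have gpos : ∀ (y : ℤ) (hy : y ∈ Q), g y = (e.symm ⟨y, hy⟩ : ℤ) := by
    intro y hy; simp only [g, dif_pos hy]
  have gneg : ∀ (y : ℤ) (hy : -y ∈ Q), g y = -((e.symm ⟨-y, hy⟩ : ℤ)) := by
    intro y hy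
    have : y ∉ Q := fun hc => by have := hQpos y hc; have := hQpos _ hy; omega
    simp only [g, dif_neg this, dif_pos hy]
  have hsymk := sym_pmSet k
  refine ⟨f, g, ?_, ?_, ?_, ?_, ?_, ?_, ?_⟩
  · exact hG
  · exact hsymk
  · -- mapsf
    intro x hx
    rcases hG.mem_cases hx with h | h
    · rw [fpos x h]; exact hQsub _ (e ⟨x, h⟩).2
    · rw [fneg x h]; exact hsymk.2 _ (hQsub _ (e ⟨-x, h⟩).2)
  · -- mapsg
    intro y hy
    rcases hsymk.mem_cases hy with h | h
    · rw [gpos y h]; exact hPsub _ (e.symm ⟨y, h⟩).2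
    · rw [gneg y h]; exact hG.2 _ (hPsub _ (e.symm ⟨-y, h⟩).2)
  · -- gf
    intro x hx
    rcases hG.mem_cases hx with h | h
    · rw [fpos x h]
      have hmem : ((e ⟨x, h⟩ : ℤ)) ∈ Q := (e ⟨x, h⟩).2
      rw [gpos _ hmem]
      have : (⟨(e ⟨x, h⟩ : ℤ), hmem⟩ : {y // y ∈ Q}) = e ⟨x, h⟩ := Subtype.coe_eta _ _
      rw [this, Equiv.symm_apply_apply]
    · rw [fneg x h]
      have hmem : ((e ⟨-x, h⟩ : ℤ)) ∈ Q := (e ⟨-x, h⟩).2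
      have hneg : -(-((e ⟨-x, h⟩ : ℤ))) ∈ Q := by simpa using hmem
      rw [gneg _ hneg]
      have : (⟨-(-((e ⟨-x, h⟩ : ℤ))), hneg⟩ : {y // y ∈ Q}) = e ⟨-x, h⟩ := by
        apply Subtype.ext; simp
      rw [this, Equiv.symm_apply_apply]
      simp
  · -- fg
    intro y hy
    rcases hsymk.mem_cases hy with h | h
    · rw [gpos y h]
      have hmem : ((e.symm ⟨y, h⟩ : ℤ)) ∈ P := (e.symm ⟨y, h⟩).2
      rw [fpos _ hmem]
      have : (⟨(e.symm ⟨y, h⟩ : ℤ), hmem⟩ : {x // x ∈ P}) = e.symm ⟨y, h⟩ := Subtype.coe_eta _ _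
      rw [this, Equiv.apply_symm_apply]
    · rw [gneg y h]
      have hmem : ((e.symm ⟨-y, h⟩ : ℤ)) ∈ P := (e.symm ⟨-y, h⟩).2
      have hneg : -(-((e.symm ⟨-y, h⟩ : ℤ))) ∈ P := by simpa using hmem
      rw [fneg _ hneg]
      have : (⟨-(-((e.symm ⟨-y, h⟩ : ℤ))), hneg⟩ : {x // x ∈ P}) = e.symm ⟨-y, h⟩ := by
        apply Subtype.ext; simp
      rw [this, Equiv.apply_symm_apply]
      simp
  · -- oddf
    intro x hx
    rcases hG.mem_cases hx with h | h
    · have h1 : -(-x) ∈ P := by simpa using h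
      rw [fneg (-x) h1, fpos x h]
      congr 2
      simp
    · rw [fneg x h]
      have : -x ∈ P := h
      rw [fpos (-x) this]
      simp

/-- Counts only depend on the half-size of a symmetric ground set. -/
lemma ncnt_eq_pm {G : Finset ℤ} (hG : Sym G) {k : ℕ} (hk : G.card = 2 * k) :
    Ncnt G = Ncnt (pmSet k) := by
  obtain ⟨f, g, e⟩ := exists_oddEquiv hG hk
  exact e.ncnt_eq

lemma lcnt_eq_pm {G : Finset ℤ} (hG : Sym G) {k : ℕ} (hk : G.card = 2 * k) {r : ℕ} (hr : 1 ≤ r) :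
    Lcnt G r = Lcnt (pmSet k) r := by
  obtain ⟨f, g, e⟩ := exists_oddEquiv hG hk
  exact e.lcnt_eq hr

end Wilf
namespace Wilf
open Finset
open scoped Classical

/-! ### Representatives -/

noncomputable def reprZ (B : Finset ℤ) : ℤ :=
  if h : B.Nonempty then
    (if (((B.image Int.natAbs).min' (h.image _) : ℕ) : ℤ) ∈ B then
      (((B.image Int.natAbs).min' (h.image _) : ℕ) : ℤ)
    else -(((B.image Int.natAbs).min' (h.image _) : ℕ) : ℤ))
  else 0

lemma reprZ_mem {B : Finset ℤ} (h : B.Nonempty) : reprZ B ∈ B := by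
  rw [reprZ, dif_pos h]
  set m := (B.image Int.natAbs).min' (h.image _) with hm
  have hmem : m ∈ B.image Int.natAbs := Finset.min'_mem _ _
  obtain ⟨x, hx, hxm⟩ := Finset.mem_image.1 hmem
  by_cases hc : ((m : ℕ) : ℤ) ∈ B
  · rwa [if_pos hc]
  · rw [if_neg hc]
    have : x = (m : ℤ) ∨ x = -(m : ℤ) := by omega
    rcases this with rfl | rfl
    · exact absurd hx hc
    · simpa using hx

lemma natAbs_image_negBlock (B : Finset ℤ) :
    (negBlock B).image Int.natAbs = B.image Int.natAbs := by
  ext a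
  simp only [Finset.mem_image]
  constructor
  · rintro ⟨x, hx, rfl⟩
    exact ⟨-x, mem_negBlock.1 hx, by simp⟩
  · rintro ⟨x, hx, rfl⟩
    exact ⟨-x, by simpa using hx, by simp⟩

lemma reprZ_negBlock {B : Finset ℤ} (h : B.Nonempty) (hB : ∀ x ∈ B, -x ∉ B) :
    reprZ (negBlock B) = -reprZ B := by
  have h' : (negBlock B).Nonempty := by
    obtain ⟨x, hx⟩ := h; exact ⟨-x, by simpa using hx⟩
  rw [reprZ, dif_pos h', reprZ, dif_pos h]
  have hmeq : (negBlock B).image Int.natAbs = B.image Int.natAbs := natAbs_image_negBlock B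
  set m := (B.image Int.natAbs).min' (h.image _) with hm
  have hm' : ((negBlock B).image Int.natAbs).min' (h'.image _) = m := by
    congr 1
  rw [hm']
  by_cases hc : ((m : ℕ) : ℤ) ∈ B
  · rw [if_pos hc]
    have hnc : ((m : ℕ) : ℤ) ∉ negBlock B := by
      rw [mem_negBlock]
      exact fun hcon => hB _ hc (by simpa using hcon)
    rw [if_neg hnc]
  · rw [if_neg hc]
    have hmem : m ∈ B.image Int.natAbs := Finset.min'_mem _ _
    obtain ⟨x, hx, hxm⟩ := Finset.mem_image.1 hmem
    have hxe : x = (m : ℤ) ∨ x = -(m : ℤ) := by omega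
    rcases hxe with rfl | rfl
    · exact absurd hx hc
    · have hmB : ((m : ℕ) : ℤ) ∈ negBlock B := by
        rw [mem_negBlock]; simpa using hx
      rw [if_pos hmB]
      ring

/-! ### repSet -/

noncomputable def repSet (σ : Finset (Finset ℤ)) : Finset ℤ := σ.image reprZ

variable {G : Finset ℤ} {σ : Finset (Finset ℤ)}

lemma reprZ_mem_block (hσ : IsPart G σ) {B : Finset ℤ} (hB : B ∈ σ) : reprZ B ∈ B :=
  reprZ_mem (hσ.nonempty B hB)

lemma reprZ_negBlock' (hσ : IsPart G σ) {B : Finset ℤ} (hB : B ∈ σ) :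
    reprZ (negBlock B) = -reprZ B :=
  reprZ_negBlock (hσ.nonempty B hB) (fun x hx => hσ.not_neg_mem hB hx)

lemma reprZ_injOn (hσ : IsPart G σ) {B C : Finset ℤ} (hB : B ∈ σ) (hC : C ∈ σ)
    (h : reprZ B = reprZ C) : B = C :=
  hσ.eq_of_mem hB hC (reprZ_mem_block hσ hB) (h ▸ reprZ_mem_block hσ hC)

lemma repSet_subset (hσ : IsPart G σ) : repSet σ ⊆ G := by
  intro a ha
  obtain ⟨B, hB, rfl⟩ := Finset.mem_image.1 ha
  exact hσ.subset B hB (reprZ_mem_block hσ hB)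

lemma card_repSet (hσ : IsPart G σ) : (repSet σ).card = σ.card :=
  Finset.card_image_of_injOn (fun B hB C hC h => reprZ_injOn hσ hB hC h)

lemma sym_repSet (hG : Sym G) (hσ : IsPart G σ) : Sym (repSet σ) := by
  constructor
  · exact fun hc => hG.1 (repSet_subset hσ hc)
  · intro a ha
    obtain ⟨B, hB, rfl⟩ := Finset.mem_image.1 ha
    rw [← reprZ_negBlock' hσ hB]
    exact Finset.mem_image_of_mem _ (hσ.neg B hB)

lemma block_inter_repSet (hσ : IsPart G σ) {B : Finset ℤ} (hB : B ∈ σ) :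
    B ∩ repSet σ = {reprZ B} := by
  ext x
  simp only [Finset.mem_inter, Finset.mem_singleton]
  constructor
  · rintro ⟨hxB, hxA⟩
    obtain ⟨C, hC, rfl⟩ := Finset.mem_image.1 hxA
    rw [hσ.eq_of_mem hB hC hxB (reprZ_mem_block hσ hC)]
  · rintro rfl
    exact ⟨reprZ_mem_block hσ hB, Finset.mem_image_of_mem _ hB⟩

lemma mem_repSet {a : ℤ} : a ∈ repSet σ ↔ ∃ B ∈ σ, a = reprZ B := by
  simp [repSet, eq_comm]

/-! ### Restriction and lift -/

noncomputable def restr (σ π : Finset (Finset ℤ)) : Finset (Finset ℤ) :=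
  π.image (fun B => B ∩ repSet σ)

noncomputable def liftB (σ : Finset (Finset ℤ)) (B' : Finset ℤ) : Finset ℤ :=
  (σ.filter (fun C => reprZ C ∈ B')).sup id

noncomputable def liftP (σ τ : Finset (Finset ℤ)) : Finset (Finset ℤ) := τ.image (liftB σ)

lemma mem_liftB {B' : Finset ℤ} {x : ℤ} :
    x ∈ liftB σ B' ↔ ∃ C ∈ σ, reprZ C ∈ B' ∧ x ∈ C := by
  simp only [liftB, Finset.mem_sup, Finset.mem_filter, id_eq]
  tauto

lemma rel_trans {π : Finset (Finset ℤ)} (hπ : IsPart G π) {x y z : ℤ}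
    (h1 : Rel π x y) (h2 : Rel π y z) : Rel π x z := by
  obtain ⟨B, hB, hx, hy⟩ := h1
  obtain ⟨C, hC, hy', hz⟩ := h2
  exact ⟨B, hB, hx, (hπ.eq_of_mem hB hC hy hy') ▸ hz⟩

section RL
variable {π τ : Finset (Finset ℤ)}

/-- every σ-block is contained in the π-block of any of its elements. -/
lemma block_sub (hπ : IsPart G π) (hle : ∀ x y, Rel σ x y → Rel π x y)
    {B C : Finset ℤ} {x : ℤ} (hB : B ∈ π) (hxB : x ∈ B) (hC : C ∈ σ) (hxC : x ∈ C) :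
    C ⊆ B := by
  intro y hy
  exact (hπ.rel_iff hB hxB).1 (hle x y ⟨C, hC, hxC, hy⟩)

lemma restr_isPart (hG : Sym G) (hσ : IsPart G σ) (hπ : IsPart G π)
    (hle : ∀ x y, Rel σ x y → Rel π x y) : IsPart (repSet σ) (restr σ π) := by
  have hA : Sym (repSet σ) := sym_repSet hG hσ
  have hnegA : negBlock (repSet σ) = repSet σ := by
    ext x; rw [mem_negBlock, hA.neg_mem_iff]
  constructor
  · intro D hD
    obtain ⟨B, _, rfl⟩ := Finset.mem_image.1 hD
    exact Finset.inter_subset_right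
  · intro D hD
    obtain ⟨B, hB, rfl⟩ := Finset.mem_image.1 hD
    obtain ⟨x, hxB⟩ := hπ.nonempty B hB
    obtain ⟨C, ⟨hC, hxC⟩, _⟩ := hσ.exu x (hπ.subset B hB hxB)
    have hCB : C ⊆ B := block_sub hπ hle hB hxB hC hxC
    exact ⟨reprZ C, Finset.mem_inter.2 ⟨hCB (reprZ_mem_block hσ hC),
      Finset.mem_image_of_mem _ hC⟩⟩
  · intro a ha
    have haG : a ∈ G := repSet_subset hσ ha
    obtain ⟨B, ⟨hB, haB⟩, hu⟩ := hπ.exu a haG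
    refine ⟨B ∩ repSet σ, ⟨Finset.mem_image_of_mem _ hB, Finset.mem_inter.2 ⟨haB, ha⟩⟩, ?_⟩
    rintro D ⟨hD, haD⟩
    obtain ⟨B', hB', rfl⟩ := Finset.mem_image.1 hD
    rw [hu B' ⟨hB', (Finset.mem_inter.1 haD).1⟩]
  · intro D hD
    obtain ⟨B, hB, rfl⟩ := Finset.mem_image.1 hD
    rw [negBlock_inter, hnegA]
    exact Finset.mem_image_of_mem _ (hπ.neg B hB)
  · intro D hD hcon
    obtain ⟨B, hB, rfl⟩ := Finset.mem_image.1 hD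
    obtain ⟨x, hxB⟩ : (B ∩ repSet σ).Nonempty := by
      obtain ⟨y, hyB⟩ := hπ.nonempty B hB
      obtain ⟨C, ⟨hC, hyC⟩, _⟩ := hσ.exu y (hπ.subset B hB hyB)
      exact ⟨reprZ C, Finset.mem_inter.2 ⟨block_sub hπ hle hB hyB hC hyC
        (reprZ_mem_block hσ hC), Finset.mem_image_of_mem _ hC⟩⟩
    have hx' : -x ∈ B ∩ repSet σ := by
      have : -x ∈ negBlock (B ∩ repSet σ) := by simpa using hxB
      rwa [hcon] at this
    exact hπ.not_neg_mem hB (Finset.mem_inter.1 hxB).1 (Finset.mem_inter.1 hx').1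

lemma rel_restr (hπ : IsPart G π) (hle : ∀ x y, Rel σ x y → Rel π x y)
    {a b : ℤ} (ha : a ∈ repSet σ) :
    Rel (restr σ π) a b ↔ Rel π a b ∧ b ∈ repSet σ := by
  constructor
  · rintro ⟨D, hD, haD, hbD⟩
    obtain ⟨B, hB, rfl⟩ := Finset.mem_image.1 hD
    exact ⟨⟨B, hB, (Finset.mem_inter.1 haD).1, (Finset.mem_inter.1 hbD).1⟩,
      (Finset.mem_inter.1 hbD).2⟩
  · rintro ⟨⟨B, hB, haB, hbB⟩, hbA⟩
    exact ⟨B ∩ repSet σ, Finset.mem_image_of_mem _ hB,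
      Finset.mem_inter.2 ⟨haB, ha⟩, Finset.mem_inter.2 ⟨hbB, hbA⟩⟩

lemma subset_liftB (hσ : IsPart G σ) {B' : Finset ℤ} (hB' : B' ⊆ repSet σ) :
    B' ⊆ liftB σ B' := by
  intro a ha
  obtain ⟨C, hC, rfl⟩ := mem_repSet.1 (hB' ha)
  exact mem_liftB.2 ⟨C, hC, ha, reprZ_mem_block hσ hC⟩

lemma liftB_inter (hσ : IsPart G σ) {B' : Finset ℤ} (hB' : B' ⊆ repSet σ) :
    liftB σ B' ∩ repSet σ = B' := by
  apply Finset.Subset.antisymm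
  · intro x hx
    obtain ⟨hx1, hx2⟩ := Finset.mem_inter.1 hx
    obtain ⟨C, hC, hrC, hxC⟩ := mem_liftB.1 hx1
    obtain ⟨C', hC', rfl⟩ := mem_repSet.1 hx2
    have hCC' : C' = C := hσ.eq_of_mem hC' hC (reprZ_mem_block hσ hC') hxC
    rw [hCC']
    exact hrC
  · intro a ha
    exact Finset.mem_inter.2 ⟨subset_liftB hσ hB' ha, hB' ha⟩

lemma liftB_negBlock (hσ : IsPart G σ) {B' : Finset ℤ} :
    liftB σ (negBlock B') = negBlock (liftB σ B') := by
  ext x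
  rw [mem_negBlock, mem_liftB, mem_liftB]
  constructor
  · rintro ⟨C, hC, hrC, hxC⟩
    refine ⟨negBlock C, hσ.neg C hC, ?_, by simpa using hxC⟩
    rw [reprZ_negBlock' hσ hC]
    rwa [mem_negBlock] at hrC
  · rintro ⟨C, hC, hrC, hxC⟩
    refine ⟨negBlock C, hσ.neg C hC, ?_, by simpa using hxC⟩
    rw [mem_negBlock, reprZ_negBlock' hσ hC]
    simpa using hrC

lemma liftP_isPart (hG : Sym G) (hσ : IsPart G σ) (hτ : IsPart (repSet σ) τ) :
    IsPart G (liftP σ τ) := by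
  constructor
  · intro D hD
    obtain ⟨B', hB', rfl⟩ := Finset.mem_image.1 hD
    intro x hx
    obtain ⟨C, hC, _, hxC⟩ := mem_liftB.1 hx
    exact hσ.subset C hC hxC
  · intro D hD
    obtain ⟨B', hB', rfl⟩ := Finset.mem_image.1 hD
    obtain ⟨a, ha⟩ := hτ.nonempty B' hB'
    exact ⟨a, subset_liftB hσ (hτ.subset B' hB') ha⟩
  · intro x hx
    obtain ⟨C, ⟨hC, hxC⟩, _⟩ := hσ.exu x hx
    have haA : reprZ C ∈ repSet σ := Finset.mem_image_of_mem _ hC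
    obtain ⟨B', ⟨hB', haB'⟩, hu⟩ := hτ.exu (reprZ C) haA
    refine ⟨liftB σ B', ⟨Finset.mem_image_of_mem _ hB', mem_liftB.2 ⟨C, hC, haB', hxC⟩⟩, ?_⟩
    rintro D ⟨hD, hxD⟩
    obtain ⟨B'', hB'', rfl⟩ := Finset.mem_image.1 hD
    obtain ⟨C₂, hC₂, hrC₂, hxC₂⟩ := mem_liftB.1 hxD
    have : C₂ = C := hσ.eq_of_mem hC₂ hC hxC₂ hxC
    subst this
    rw [hu B'' ⟨hB'', hrC₂⟩]
  · intro D hD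
    obtain ⟨B', hB', rfl⟩ := Finset.mem_image.1 hD
    rw [← liftB_negBlock hσ]
    exact Finset.mem_image_of_mem _ (hτ.neg B' hB')
  · intro D hD hcon
    obtain ⟨B', hB', rfl⟩ := Finset.mem_image.1 hD
    rw [← liftB_negBlock hσ] at hcon
    have h1 := liftB_inter hσ (hτ.subset B' hB')
    have h2 := liftB_inter hσ (hτ.subset _ (hτ.neg B' hB'))
    refine hτ.nz B' hB' ?_
    calc negBlock B' = liftB σ (negBlock B') ∩ repSet σ := h2.symm
    _ = liftB σ B' ∩ repSet σ := by rw [hcon]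
    _ = B' := h1

lemma liftP_rel (hσ : IsPart G σ) (hτ : IsPart (repSet σ) τ) {x y : ℤ}
    (h : Rel σ x y) : Rel (liftP σ τ) x y := by
  obtain ⟨C, hC, hxC, hyC⟩ := h
  have haA : reprZ C ∈ repSet σ := Finset.mem_image_of_mem _ hC
  obtain ⟨B', ⟨hB', haB'⟩, _⟩ := hτ.exu (reprZ C) haA
  exact ⟨liftB σ B', Finset.mem_image_of_mem _ hB',
    mem_liftB.2 ⟨C, hC, haB', hxC⟩, mem_liftB.2 ⟨C, hC, haB', hyC⟩⟩

lemma restr_liftP (hσ : IsPart G σ) (hτ : IsPart (repSet σ) τ) :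
    restr σ (liftP σ τ) = τ := by
  ext E
  simp only [restr, liftP, Finset.mem_image, exists_exists_and_eq_and]
  constructor
  · rintro ⟨B', hB', rfl⟩
    rw [liftB_inter hσ (hτ.subset B' hB')]
    exact hB'
  · intro hE
    exact ⟨E, hE, liftB_inter hσ (hτ.subset E hE)⟩

lemma liftP_restr (hσ : IsPart G σ) (hπ : IsPart G π)
    (hle : ∀ x y, Rel σ x y → Rel π x y) : liftP σ (restr σ π) = π := by
  have key : ∀ B ∈ π, liftB σ (B ∩ repSet σ) = B := by
    intro B hB
    apply Finset.Subset.antisymm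
    · intro x hx
      obtain ⟨C, hC, hrC, hxC⟩ := mem_liftB.1 hx
      exact block_sub hπ hle hB (Finset.mem_inter.1 hrC).1 hC (reprZ_mem_block hσ hC) hxC
    · intro x hx
      obtain ⟨C, ⟨hC, hxC⟩, _⟩ := hσ.exu x (hπ.subset B hB hx)
      have hCB : C ⊆ B := block_sub hπ hle hB hx hC hxC
      exact mem_liftB.2 ⟨C, hC, Finset.mem_inter.2 ⟨hCB (reprZ_mem_block hσ hC),
        Finset.mem_image_of_mem _ hC⟩, hxC⟩
  ext E
  simp only [liftP, restr, Finset.mem_image, exists_exists_and_eq_and]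
  constructor
  · rintro ⟨B, hB, rfl⟩
    rw [key B hB]
    exact hB
  · intro hE
    exact ⟨E, hE, key E hE⟩

end RL

end Wilf
namespace Wilf
open Finset
open scoped Classical

variable {G : Finset ℤ}

lemma meet_corr (hG : Sym G) {σ : Finset (Finset ℤ)} (hσ : IsPart G σ)
    {r : ℕ} (hr : 1 ≤ r) {πs : Fin r → Finset (Finset ℤ)}
    (hparts : ∀ t, IsPart G (πs t))
    (hle : ∀ t, ∀ x y, Rel σ x y → Rel (πs t) x y) :
    meetFam G πs = σ ↔ meetFam (repSet σ) (fun t => restr σ (πs t)) = botG (repSet σ) := by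
  have hA : Sym (repSet σ) := sym_repSet hG hσ
  have hres : ∀ t, IsPart (repSet σ) (restr σ (πs t)) :=
    fun t => restr_isPart hG hσ (hparts t) (hle t)
  rw [meetFam_eq_botG_iff hA hr hres]
  constructor
  · intro heq a ha b hrel
    have hb : b ∈ repSet σ := by
      obtain ⟨D, hD, _, hbD⟩ := hrel ⟨0, hr⟩
      exact (hres _).subset D hD hbD
    have hab : ∀ t, Rel (πs t) a b := by
      intro t
      exact ((rel_restr (hparts t) (hle t) ha).1 (hrel t)).1
    have hm : Rel (meetFam G πs) a b := (rel_meetFam hr hparts).2 hab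
    rw [heq] at hm
    obtain ⟨C, hC, haC, hbC⟩ := hm
    have h1 : a ∈ C ∩ repSet σ := Finset.mem_inter.2 ⟨haC, ha⟩
    have h2 : b ∈ C ∩ repSet σ := Finset.mem_inter.2 ⟨hbC, hb⟩
    rw [block_inter_repSet hσ hC] at h1 h2
    simp only [Finset.mem_singleton] at h1 h2
    rw [h1, h2]
  · intro hkey
    apply (isPart_meetFam hr hparts).eq_of_rel hσ
    intro x y
    rw [rel_meetFam hr hparts]
    constructor
    · intro hrel
      have hx : x ∈ G := rel_mem_left (hparts ⟨0, hr⟩) (hrel ⟨0, hr⟩)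
      have hy : y ∈ G := rel_mem_right (hparts ⟨0, hr⟩) (hrel ⟨0, hr⟩)
      obtain ⟨Cx, ⟨hCx, hxCx⟩, _⟩ := hσ.exu x hx
      obtain ⟨Cy, ⟨hCy, hyCy⟩, _⟩ := hσ.exu y hy
      have haA : reprZ Cx ∈ repSet σ := Finset.mem_image_of_mem _ hCx
      have hbA : reprZ Cy ∈ repSet σ := Finset.mem_image_of_mem _ hCy
      have hab : ∀ t, Rel (πs t) (reprZ Cx) (reprZ Cy) := by
        intro t
        have h1 : Rel (πs t) x (reprZ Cx) :=
          hle t _ _ ⟨Cx, hCx, hxCx, reprZ_mem_block hσ hCx⟩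
        have h2 : Rel (πs t) y (reprZ Cy) :=
          hle t _ _ ⟨Cy, hCy, hyCy, reprZ_mem_block hσ hCy⟩
        exact rel_trans (hparts t) (rel_trans (hparts t) h1.symm (hrel t)) h2
      have hab2 : reprZ Cx = reprZ Cy := by
        apply hkey _ haA _
        intro t
        exact (rel_restr (hparts t) (hle t) haA).2 ⟨hab t, hbA⟩
      have hCeq : Cx = Cy := reprZ_injOn hσ hCx hCy hab2
      exact ⟨Cx, hCx, hxCx, hCeq ▸ hyCy⟩
    · intro hrel t
      exact hle t x y hrel

lemma hle_of_meet {σ : Finset (Finset ℤ)} {r : ℕ} (hr : 1 ≤ r)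
    {πs : Fin r → Finset (Finset ℤ)} (hparts : ∀ t, IsPart G (πs t))
    (heq : meetFam G πs = σ) : ∀ t x y, Rel σ x y → Rel (πs t) x y := by
  intro t x y h
  rw [← heq] at h
  exact (rel_meetFam hr hparts).1 h t

lemma fib_card (hG : Sym G) {σ : Finset (Finset ℤ)} (hσmem : σ ∈ parts G)
    {r : ℕ} (hr : 1 ≤ r) :
    ((Fintype.piFinset fun _ : Fin r => parts G).filter
        (fun πs => meetFam G πs = σ)).card = Lcnt (repSet σ) r := by
  have hσ := mem_parts.1 hσmem
  rw [Lcnt]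
  apply Finset.card_bij' (fun πs _ => fun t => restr σ (πs t))
    (fun τs _ => fun t => liftP σ (τs t))
  · -- forward membership
    intro πs hπs
    rw [Finset.mem_filter, Fintype.mem_piFinset] at hπs
    obtain ⟨hmem, heq⟩ := hπs
    have hp : ∀ t, IsPart G (πs t) := fun t => mem_parts.1 (hmem t)
    have hle := hle_of_meet hr hp heq
    rw [mem_tuples]
    exact ⟨fun t => restr_isPart hG hσ (hp t) (hle t),
      (meet_corr hG hσ hr hp hle).1 heq⟩
  · -- backward membership
    intro τs hτs
    rw [mem_tuples] at hτs
    obtain ⟨hτ, hmeet⟩ := hτs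
    have hp : ∀ t, IsPart G (liftP σ (τs t)) := fun t => liftP_isPart hG hσ (hτ t)
    have hle : ∀ t x y, Rel σ x y → Rel (liftP σ (τs t)) x y :=
      fun t x y h => liftP_rel hσ (hτ t) h
    rw [Finset.mem_filter, Fintype.mem_piFinset]
    refine ⟨fun t => mem_parts.2 (hp t), ?_⟩
    rw [meet_corr hG hσ hr hp hle]
    have hrw : (fun t => restr σ (liftP σ (τs t))) = τs := by
      funext t; exact restr_liftP hσ (hτ t)
    rw [hrw]
    exact hmeet
  · -- left inverse
    intro πs hπs
    rw [Finset.mem_filter, Fintype.mem_piFinset] at hπs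
    obtain ⟨hmem, heq⟩ := hπs
    have hp : ∀ t, IsPart G (πs t) := fun t => mem_parts.1 (hmem t)
    funext t
    exact liftP_restr hσ (hp t) (hle_of_meet hr hp heq t)
  · -- right inverse
    intro τs hτs
    rw [mem_tuples] at hτs
    funext t
    exact restr_liftP hσ (hτs.1 t)

noncomputable def Mcnt (n k : ℕ) : ℕ :=
  ((parts (pmSet n)).filter (fun σ => σ.card = 2 * k)).card

lemma card_le_of_parts {σ : Finset (Finset ℤ)} (hσ : IsPart G σ) : σ.card ≤ G.card := by
  apply Finset.card_le_card_of_injOn reprZ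
  · intro B hB
    exact hσ.subset B hB (reprZ_mem_block hσ hB)
  · intro B hB C hC h
    exact reprZ_injOn hσ (Finset.mem_coe.1 hB) (Finset.mem_coe.1 hC) h

lemma keyA (n : ℕ) {r : ℕ} (hr : 1 ≤ r) :
    (Ncnt (pmSet n)) ^ r
      = ∑ k ∈ Finset.range (n + 1), Mcnt n k * Lcnt (pmSet k) r := by
  set G := pmSet n with hGdef
  have hG : Sym G := sym_pmSet n
  have h1 : (Fintype.piFinset fun _ : Fin r => parts G).card = (Ncnt G) ^ r := by
    rw [Fintype.card_piFinset]
    simp [Ncnt]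
  have hmaps : ∀ πs ∈ (Fintype.piFinset fun _ : Fin r => parts G),
      meetFam G πs ∈ parts G := by
    intro πs hπs
    rw [Fintype.mem_piFinset] at hπs
    exact mem_parts.2 (isPart_meetFam hr (fun t => mem_parts.1 (hπs t)))
  have heven : ∀ σ ∈ parts G, σ.card = 2 * ((σ.card) / 2) := by
    intro σ hσmem
    have hσ := mem_parts.1 hσmem
    have h2 := card_eq_two_mul_posPart (sym_repSet hG hσ)
    have h3 := card_repSet hσ
    omega
  have hfib : ∀ σ ∈ parts G,
      ((Fintype.piFinset fun _ : Fin r => parts G).filter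
        (fun πs => meetFam G πs = σ)).card = Lcnt (pmSet (σ.card / 2)) r := by
    intro σ hσmem
    have hσ := mem_parts.1 hσmem
    rw [fib_card hG hσmem hr]
    apply lcnt_eq_pm (sym_repSet hG hσ) _ hr
    rw [card_repSet hσ]
    exact heven σ hσmem
  rw [← h1, Finset.card_eq_sum_card_fiberwise hmaps]
  rw [Finset.sum_congr rfl hfib]
  have hmapk : ∀ σ ∈ parts G, σ.card / 2 ∈ Finset.range (n + 1) := by
    intro σ hσmem
    have := card_le_of_parts (mem_parts.1 hσmem)
    rw [Finset.mem_range]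
    have hc : G.card = 2 * n := card_pmSet n
    omega
  rw [← Finset.sum_fiberwise_of_maps_to hmapk (fun σ => Lcnt (pmSet (σ.card / 2)) r)]
  apply Finset.sum_congr rfl
  intro k hk
  have hin : ∀ σ ∈ (parts G).filter (fun σ => σ.card / 2 = k),
      Lcnt (pmSet (σ.card / 2)) r = Lcnt (pmSet k) r := by
    intro σ hσmem
    rw [Finset.mem_filter] at hσmem
    rw [hσmem.2]
  rw [Finset.sum_congr rfl hin, Finset.sum_const, smul_eq_mul]
  congr 1
  rw [Mcnt]
  congr 1
  apply Finset.filter_congr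
  intro σ hσmem
  have := heven σ hσmem
  constructor
  · intro h; omega
  · intro h; omega

end Wilf
namespace Wilf
open Finset
open scoped Classical

/-! ### Auxiliary facts for the insertion recurrence -/

lemma negBlock_insert (a : ℤ) (s : Finset ℤ) :
    negBlock (insert a s) = insert (-a) (negBlock s) := by
  ext x; simp only [mem_negBlock, Finset.mem_insert]; constructor
  · rintro (h | h)
    · left; omega
    · right; simpa using h
  · rintro (h | h)
    · left; omega
    · right; simpa using h

lemma nz_sub {G : Finset ℤ} {π : Finset (Finset ℤ)} (hπ : IsPart G π)
    {B D : Finset ℤ} (hB : B ∈ π) (hD : D ⊆ B) (hne : D.Nonempty) : negBlock D ≠ D := by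
  intro hcon
  obtain ⟨x, hx⟩ := hne
  have hx' : -x ∈ D := by
    have : -x ∈ negBlock D := by simpa using hx
    rwa [hcon] at this
  exact hπ.not_neg_mem hB (hD hx) (hD hx')

section Insertion

variable {n : ℕ}

lemma pm_mem_e : ((n : ℤ) + 1) ∈ pmSet (n + 1) := by
  rw [mem_pmSet]; push_cast; omega

lemma pm_mem_ne : -((n : ℤ) + 1) ∈ pmSet (n + 1) := by
  rw [mem_pmSet]; push_cast; omega

lemma pm_not_mem_e : ((n : ℤ) + 1) ∉ pmSet n := by
  rw [mem_pmSet]; push_cast; omega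

lemma pm_not_mem_ne : -((n : ℤ) + 1) ∉ pmSet n := by
  rw [mem_pmSet]; push_cast; omega

lemma pm_subset : pmSet n ⊆ pmSet (n + 1) := by
  intro x hx; rw [mem_pmSet] at hx ⊢; push_cast; omega

lemma mem_pm_iff {x : ℤ} :
    x ∈ pmSet n ↔ x ∈ pmSet (n + 1) ∧ x ≠ (n : ℤ) + 1 ∧ x ≠ -((n : ℤ) + 1) := by
  simp only [mem_pmSet]; push_cast; omega

/-- the block of `x` in `π`. -/
noncomputable def blkOf (π : Finset (Finset ℤ)) (x : ℤ) : Finset ℤ :=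
  (π.filter (fun B => x ∈ B)).sup id

lemma blkOf_spec {G : Finset ℤ} {π : Finset (Finset ℤ)} (hπ : IsPart G π) {x : ℤ}
    (hx : x ∈ G) : blkOf π x ∈ π ∧ x ∈ blkOf π x := by
  obtain ⟨B, ⟨hB, hxB⟩, hu⟩ := hπ.exu x hx
  have hfil : π.filter (fun C => x ∈ C) = {B} := by
    ext C
    simp only [Finset.mem_filter, Finset.mem_singleton]
    constructor
    · rintro ⟨h1, h2⟩; exact hu C ⟨h1, h2⟩
    · rintro rfl; exact ⟨hB, hxB⟩
  rw [blkOf, hfil, Finset.sup_singleton, id_eq]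
  exact ⟨hB, hxB⟩

lemma blkOf_eq {G : Finset ℤ} {π : Finset (Finset ℤ)} (hπ : IsPart G π) {x : ℤ}
    {B : Finset ℤ} (hB : B ∈ π) (hxB : x ∈ B) : blkOf π x = B := by
  have hx : x ∈ G := hπ.subset B hB hxB
  obtain ⟨h1, h2⟩ := blkOf_spec hπ hx
  exact hπ.eq_of_mem h1 hB h2 hxB

/-! ### Bijection 1 : partitions having the singleton pair {±(n+1)} -/

lemma bij1 (k : ℕ) :
    (((parts (pmSet (n + 1))).filter
        (fun σ => σ.card = 2 * (k + 1) ∧ ({((n : ℤ) + 1)} : Finset ℤ) ∈ σ))).card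
      = Mcnt n k := by
  set E : ℤ := (n : ℤ) + 1 with hE
  have hEne : E ≠ -E := by simp [hE]; omega
  have hsingne : ({E} : Finset ℤ) ≠ {-E} := by
    intro h
    have : E ∈ ({-E} : Finset ℤ) := h ▸ Finset.mem_singleton_self E
    simp at this; omega
  rw [Mcnt]
  apply Finset.card_bij' (fun σ _ => (σ.erase {E}).erase {-E})
    (fun σ' _ => insert ({E} : Finset ℤ) (insert ({-E} : Finset ℤ) σ'))
  · -- left inverse
    intro σ hσm
    rw [Finset.mem_filter] at hσm
    obtain ⟨hσp, _, hsing⟩ := hσm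
    have hσ := mem_parts.1 hσp
    have hnsing : ({-E} : Finset ℤ) ∈ σ := by
      have := hσ.neg _ hsing
      rwa [negBlock_singleton] at this
    have h1 : ({-E} : Finset ℤ) ∈ σ.erase {E} := Finset.mem_erase.2 ⟨hsingne.symm, hnsing⟩
    rw [Finset.insert_erase h1, Finset.insert_erase hsing]
  · -- right inverse
    intro σ' hσ'm
    rw [Finset.mem_filter] at hσ'm
    obtain ⟨hσ'p, _⟩ := hσ'm
    have hσ' := mem_parts.1 hσ'p
    have hs1 : ({E} : Finset ℤ) ∉ σ' :=
      fun hc => pm_not_mem_e (hσ'.subset _ hc (Finset.mem_singleton_self E))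
    have hs2 : ({-E} : Finset ℤ) ∉ σ' :=
      fun hc => pm_not_mem_ne (hσ'.subset _ hc (Finset.mem_singleton_self (-E)))
    have hout : ({E} : Finset ℤ) ∉ insert ({-E} : Finset ℤ) σ' := by
      rw [Finset.mem_insert]
      push_neg
      exact ⟨hsingne, hs1⟩
    rw [Finset.erase_insert hout, Finset.erase_insert hs2]
  · -- forward membership
    intro σ hσm
    rw [Finset.mem_filter] at hσm
    obtain ⟨hσp, hcard, hsing⟩ := hσm
    have hσ := mem_parts.1 hσp
    have hnsing : ({-E} : Finset ℤ) ∈ σ := by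
      have := hσ.neg _ hsing
      rwa [negBlock_singleton] at this
    have hmem1 : ∀ B ∈ σ, B ≠ {E} → B ≠ {-E} → B ⊆ pmSet n := by
      intro B hB h1 h2 x hx
      rw [mem_pm_iff]
      refine ⟨hσ.subset B hB hx, ?_, ?_⟩
      · intro hxe
        rw [hxe] at hx
        exact h1 (hσ.eq_of_mem hB hsing hx (Finset.mem_singleton_self E))
      · intro hxe
        rw [hxe] at hx
        exact h2 (hσ.eq_of_mem hB hnsing hx (Finset.mem_singleton_self (-E)))
    rw [Finset.mem_filter]
    constructor
    · rw [mem_parts]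
      constructor
      · intro B hB
        simp only [Finset.mem_erase] at hB
        exact hmem1 B hB.2.2 hB.2.1 hB.1
      · intro B hB
        simp only [Finset.mem_erase] at hB
        exact hσ.nonempty B hB.2.2
      · intro x hx
        have hxG : x ∈ pmSet (n + 1) := pm_subset hx
        obtain ⟨B, ⟨hB, hxB⟩, hu⟩ := hσ.exu x hxG
        have hB1 : B ≠ {E} := by
          rintro rfl
          rw [Finset.mem_singleton] at hxB
          exact pm_not_mem_e (hxB ▸ hx)
        have hB2 : B ≠ {-E} := by
          rintro rfl
          rw [Finset.mem_singleton] at hxB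
          exact pm_not_mem_ne (hxB ▸ hx)
        refine ⟨B, ⟨by simp only [Finset.mem_erase]; exact ⟨hB2, hB1, hB⟩, hxB⟩, ?_⟩
        rintro C ⟨hC, hxC⟩
        simp only [Finset.mem_erase] at hC
        exact hu C ⟨hC.2.2, hxC⟩
      · intro B hB
        simp only [Finset.mem_erase] at hB ⊢
        refine ⟨?_, ?_, hσ.neg B hB.2.2⟩
        · intro hcon
          apply hB.2.1
          rw [← negBlock_negBlock B, hcon, negBlock_singleton, neg_neg]
        · intro hcon
          apply hB.1
          rw [← negBlock_negBlock B, hcon, negBlock_singleton]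
      · intro B hB
        simp only [Finset.mem_erase] at hB
        exact hσ.nz B hB.2.2
    · -- card
      have h1 : ({-E} : Finset ℤ) ∈ σ.erase {E} := Finset.mem_erase.2 ⟨hsingne.symm, hnsing⟩
      rw [Finset.card_erase_of_mem h1, Finset.card_erase_of_mem hsing, hcard]
      omega
  · -- backward membership
    intro σ' hσ'm
    rw [Finset.mem_filter] at hσ'm
    obtain ⟨hσ'p, hcard⟩ := hσ'm
    have hσ' := mem_parts.1 hσ'p
    have hEnot : ∀ B ∈ σ', E ∉ B := fun B hB hc => pm_not_mem_e (hσ'.subset B hB hc)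
    have hnEnot : ∀ B ∈ σ', -E ∉ B := fun B hB hc => pm_not_mem_ne (hσ'.subset B hB hc)
    have hs1 : ({E} : Finset ℤ) ∉ σ' := fun hc => hEnot _ hc (Finset.mem_singleton_self E)
    have hs2 : ({-E} : Finset ℤ) ∉ σ' := fun hc => hnEnot _ hc (Finset.mem_singleton_self (-E))
    rw [Finset.mem_filter]
    refine ⟨?_, ?_, by simp⟩
    · rw [mem_parts]
      constructor
      · intro B hB
        simp only [Finset.mem_insert] at hB
        rcases hB with rfl | rfl | hB
        · intro x hx; rw [Finset.mem_singleton] at hx; exact hx ▸ pm_mem_e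
        · intro x hx; rw [Finset.mem_singleton] at hx; exact hx ▸ pm_mem_ne
        · exact fun x hx => pm_subset (hσ'.subset B hB hx)
      · intro B hB
        simp only [Finset.mem_insert] at hB
        rcases hB with rfl | rfl | hB
        · simp
        · simp
        · exact hσ'.nonempty B hB
      · intro x hx
        by_cases hxe : x = E
        · subst hxe
          refine ⟨{E}, ⟨by simp, by simp⟩, ?_⟩
          rintro C ⟨hC, hxC⟩
          simp only [Finset.mem_insert] at hC
          rcases hC with rfl | rfl | hC
          · rfl
          · rw [Finset.mem_singleton] at hxC; exact absurd hxC hEne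
          · exact absurd hxC (hEnot C hC)
        by_cases hxne : x = -E
        · subst hxne
          refine ⟨{-E}, ⟨by simp, by simp⟩, ?_⟩
          rintro C ⟨hC, hxC⟩
          simp only [Finset.mem_insert] at hC
          rcases hC with rfl | rfl | hC
          · rw [Finset.mem_singleton] at hxC; exact absurd hxC.symm hEne
          · rfl
          · exact absurd hxC (hnEnot C hC)
        · have hxn : x ∈ pmSet n := mem_pm_iff.2 ⟨hx, hxe, hxne⟩
          obtain ⟨B, ⟨hB, hxB⟩, hu⟩ := hσ'.exu x hxn
          refine ⟨B, ⟨by simp [hB], hxB⟩, ?_⟩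
          rintro C ⟨hC, hxC⟩
          simp only [Finset.mem_insert] at hC
          rcases hC with rfl | rfl | hC
          · rw [Finset.mem_singleton] at hxC; exact absurd hxC hxe
          · rw [Finset.mem_singleton] at hxC; exact absurd hxC hxne
          · exact hu C ⟨hC, hxC⟩
      · intro B hB
        simp only [Finset.mem_insert] at hB ⊢
        rcases hB with rfl | rfl | hB
        · rw [negBlock_singleton]; right; left; rfl
        · rw [negBlock_singleton, neg_neg]; left; rfl
        · right; right; exact hσ'.neg B hB
      · intro B hB
        simp only [Finset.mem_insert] at hB
        rcases hB with rfl | rfl | hB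
        · rw [negBlock_singleton]; exact hsingne.symm
        · rw [negBlock_singleton, neg_neg]; exact hsingne
        · exact hσ'.nz B hB
    · -- card
      have hout : ({E} : Finset ℤ) ∉ insert ({-E} : Finset ℤ) σ' := by
        rw [Finset.mem_insert]
        push_neg
        exact ⟨hsingne, hs1⟩
      rw [Finset.card_insert_of_notMem hout, Finset.card_insert_of_notMem hs2, hcard]
      omega

end Insertion

end Wilf
namespace Wilf
open Finset
open scoped Classical

section Insertion2

variable {n : ℕ}

/-- delete `±(n+1)`. -/
def dB (n : ℕ) (B : Finset ℤ) : Finset ℤ := (B.erase ((n : ℤ) + 1)).erase (-((n : ℤ) + 1))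

lemma mem_dB {B : Finset ℤ} {x : ℤ} :
    x ∈ dB n B ↔ x ∈ B ∧ x ≠ (n : ℤ) + 1 ∧ x ≠ -((n : ℤ) + 1) := by
  simp only [dB, Finset.mem_erase]
  tauto

lemma dB_subset {B : Finset ℤ} : dB n B ⊆ B := fun x hx => (mem_dB.1 hx).1

lemma negBlock_dB {B : Finset ℤ} : negBlock (dB n B) = dB n (negBlock B) := by
  ext x
  simp only [mem_negBlock, mem_dB]
  constructor
  · rintro ⟨h1, h2, h3⟩; exact ⟨h1, by omega, by omega⟩
  · rintro ⟨h1, h2, h3⟩; exact ⟨h1, by omega, by omega⟩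

noncomputable def down (n : ℕ) (σ : Finset (Finset ℤ)) : Finset (Finset ℤ) := σ.image (dB n)

/-- insert `n+1` into `B` and `-(n+1)` into `-B`. -/
noncomputable def upF (n : ℕ) (B C : Finset ℤ) : Finset ℤ :=
  if C = B then insert ((n : ℤ) + 1) C
  else if C = negBlock B then insert (-((n : ℤ) + 1)) C else C

noncomputable def up (n : ℕ) (σ' : Finset (Finset ℤ)) (B : Finset ℤ) : Finset (Finset ℤ) :=
  σ'.image (upF n B)

section DownFacts

variable {σ : Finset (Finset ℤ)} (hσ : IsPart (pmSet (n + 1)) σ)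
  (hsing : ({((n : ℤ) + 1)} : Finset ℤ) ∉ σ)

include hσ hsing

lemma nsing_not_mem : ({-((n : ℤ) + 1)} : Finset ℤ) ∉ σ := by
  intro hc
  have := hσ.neg _ hc
  rw [negBlock_singleton, neg_neg] at this
  exact hsing this

lemma dB_nonempty {B : Finset ℤ} (hB : B ∈ σ) : (dB n B).Nonempty := by
  by_contra hc
  rw [Finset.not_nonempty_iff_eq_empty] at hc
  have hsub : B ⊆ {(n : ℤ) + 1, -((n : ℤ) + 1)} := by
    intro x hx
    have : x ∉ dB n B := by rw [hc]; exact Finset.notMem_empty x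
    rw [mem_dB] at this
    push_neg at this
    simp only [Finset.mem_insert, Finset.mem_singleton]
    rcases Classical.em (x = (n : ℤ) + 1) with h | h
    · exact Or.inl h
    · exact Or.inr (this hx h)
  have hnotboth : ¬ (((n : ℤ) + 1) ∈ B ∧ (-((n : ℤ) + 1)) ∈ B) := by
    rintro ⟨h1, h2⟩
    exact hσ.not_neg_mem hB h1 h2
  obtain ⟨x, hx⟩ := hσ.nonempty B hB
  have hx' := hsub hx
  simp only [Finset.mem_insert, Finset.mem_singleton] at hx'
  rcases hx' with rfl | rfl
  · -- B = {E}
    apply hsing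
    have : B = {(n : ℤ) + 1} := by
      apply Finset.Subset.antisymm
      · intro y hy
        have hy' := hsub hy
        simp only [Finset.mem_insert, Finset.mem_singleton] at hy' ⊢
        rcases hy' with rfl | rfl
        · rfl
        · exact absurd ⟨hx, hy⟩ hnotboth
      · intro y hy
        rw [Finset.mem_singleton] at hy
        exact hy ▸ hx
    exact this ▸ hB
  · apply nsing_not_mem hσ hsing
    have : B = {-((n : ℤ) + 1)} := by
      apply Finset.Subset.antisymm
      · intro y hy
        have hy' := hsub hy
        simp only [Finset.mem_insert, Finset.mem_singleton] at hy' ⊢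
        rcases hy' with rfl | rfl
        · exact absurd ⟨hy, hx⟩ hnotboth
        · rfl
      · intro y hy
        rw [Finset.mem_singleton] at hy
        exact hy ▸ hx
    exact this ▸ hB

lemma dB_inj {B C : Finset ℤ} (hB : B ∈ σ) (hC : C ∈ σ) (h : dB n B = dB n C) : B = C := by
  obtain ⟨x, hx⟩ := dB_nonempty hσ hsing hB
  have hx' : x ∈ dB n C := h ▸ hx
  exact hσ.eq_of_mem hB hC (dB_subset hx) (dB_subset hx')

lemma down_isPart : IsPart (pmSet n) (down n σ) := by
  constructor
  · intro D hD
    obtain ⟨B, hB, rfl⟩ := Finset.mem_image.1 hD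
    intro x hx
    rw [mem_dB] at hx
    exact mem_pm_iff.2 ⟨hσ.subset B hB hx.1, hx.2.1, hx.2.2⟩
  · intro D hD
    obtain ⟨B, hB, rfl⟩ := Finset.mem_image.1 hD
    exact dB_nonempty hσ hsing hB
  · intro x hx
    rw [mem_pm_iff] at hx
    obtain ⟨B, ⟨hB, hxB⟩, hu⟩ := hσ.exu x hx.1
    refine ⟨dB n B, ⟨Finset.mem_image_of_mem _ hB, mem_dB.2 ⟨hxB, hx.2.1, hx.2.2⟩⟩, ?_⟩
    rintro D ⟨hD, hxD⟩
    obtain ⟨C, hC, rfl⟩ := Finset.mem_image.1 hD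
    rw [hu C ⟨hC, dB_subset hxD⟩]
  · intro D hD
    obtain ⟨B, hB, rfl⟩ := Finset.mem_image.1 hD
    rw [negBlock_dB]
    exact Finset.mem_image_of_mem _ (hσ.neg B hB)
  · intro D hD
    obtain ⟨B, hB, rfl⟩ := Finset.mem_image.1 hD
    exact nz_sub hσ hB dB_subset (dB_nonempty hσ hsing hB)

lemma down_card : (down n σ).card = σ.card :=
  Finset.card_image_of_injOn (fun B hB C hC h => dB_inj hσ hsing hB hC h)

end DownFacts

section UpFacts

variable {σ' : Finset (Finset ℤ)} {B : Finset ℤ}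
  (hσ' : IsPart (pmSet n) σ') (hB : B ∈ σ')

include hσ' hB

lemma upF_B : upF n B B = insert ((n : ℤ) + 1) B := by rw [upF, if_pos rfl]

lemma upF_nB : upF n B (negBlock B) = insert (-((n : ℤ) + 1)) (negBlock B) := by
  rw [upF, if_neg, if_pos rfl]
  exact hσ'.nz B hB

lemma upF_other {C : Finset ℤ} (h1 : C ≠ B) (h2 : C ≠ negBlock B) : upF n B C = C := by
  rw [upF, if_neg h1, if_neg h2]

lemma E_not_mem {C : Finset ℤ} (hC : C ∈ σ') : ((n : ℤ) + 1) ∉ C :=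
  fun hc => pm_not_mem_e (hσ'.subset C hC hc)

lemma nE_not_mem {C : Finset ℤ} (hC : C ∈ σ') : (-((n : ℤ) + 1)) ∉ C :=
  fun hc => pm_not_mem_ne (hσ'.subset C hC hc)

lemma upF_superset {C : Finset ℤ} : C ⊆ upF n B C := by
  rw [upF]
  split_ifs with h1 h2
  · exact Finset.subset_insert _ _
  · exact Finset.subset_insert _ _
  · exact Finset.Subset.refl C

lemma upF_sub_cases {C : Finset ℤ} {x : ℤ} (hx : x ∈ upF n B C) :
    x ∈ C ∨ x = (n : ℤ) + 1 ∨ x = -((n : ℤ) + 1) := by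
  rw [upF] at hx
  split_ifs at hx with h1 h2
  · rcases Finset.mem_insert.1 hx with h | h
    · exact Or.inr (Or.inl h)
    · exact Or.inl h
  · rcases Finset.mem_insert.1 hx with h | h
    · exact Or.inr (Or.inr h)
    · exact Or.inl h
  · exact Or.inl hx

lemma upF_inj {C C' : Finset ℤ} (hC : C ∈ σ') (hC' : C' ∈ σ')
    (h : upF n B C = upF n B C') : C = C' := by
  obtain ⟨x, hx⟩ := hσ'.nonempty C hC
  have hx1 : x ∈ upF n B C' := h ▸ upF_superset hσ' hB hx
  have hxn : x ∈ pmSet n := hσ'.subset C hC hx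
  rcases upF_sub_cases hσ' hB hx1 with h' | h' | h'
  · exact hσ'.eq_of_mem hC hC' hx h'
  · exact absurd (h' ▸ hxn) pm_not_mem_e
  · exact absurd (h' ▸ hxn) pm_not_mem_ne

lemma negBlock_upF {C : Finset ℤ} (hC : C ∈ σ') :
    negBlock (upF n B C) = upF n B (negBlock C) := by
  have hnzB : negBlock B ≠ B := hσ'.nz B hB
  by_cases h1 : C = B
  · subst h1
    rw [upF_B hσ' hB, negBlock_insert, upF, if_neg hnzB, if_pos rfl]
  · by_cases h2 : C = negBlock C
    · exact absurd h2.symm (hσ'.nz C hC)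
    · by_cases h3 : C = negBlock B
      · subst h3
        rw [upF_nB hσ' hB, negBlock_insert, neg_neg, negBlock_negBlock, upF_B hσ' hB]
      · rw [upF_other hσ' hB h1 h3, upF_other hσ' hB]
        · intro hc
          exact h3 (by rw [← negBlock_negBlock C, hc])
        · intro hc
          exact h1 (by rw [← negBlock_negBlock C, hc, negBlock_negBlock])

lemma up_isPart : IsPart (pmSet (n + 1)) (up n σ' B) := by
  constructor
  · intro D hD
    obtain ⟨C, hC, rfl⟩ := Finset.mem_image.1 hD
    intro x hx
    rcases upF_sub_cases hσ' hB hx with h | rfl | rfl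
    · exact pm_subset (hσ'.subset C hC h)
    · exact pm_mem_e
    · exact pm_mem_ne
  · intro D hD
    obtain ⟨C, hC, rfl⟩ := Finset.mem_image.1 hD
    exact (hσ'.nonempty C hC).mono (upF_superset hσ' hB)
  · intro x hx
    by_cases hxe : x = (n : ℤ) + 1
    · subst hxe
      refine ⟨upF n B B, ⟨Finset.mem_image_of_mem _ hB, ?_⟩, ?_⟩
      · rw [upF_B hσ' hB]; exact Finset.mem_insert_self _ _
      · rintro D ⟨hD, hxD⟩
        obtain ⟨C, hC, rfl⟩ := Finset.mem_image.1 hD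
        congr 1
        by_cases h1 : C = B
        · exact h1
        · exfalso
          by_cases h2 : C = negBlock B
          · subst h2
            rw [upF_nB hσ' hB] at hxD
            rcases Finset.mem_insert.1 hxD with h | h
            · omega
            · exact E_not_mem hσ' hB (hσ'.neg B hB) h
          · rw [upF_other hσ' hB h1 h2] at hxD
            exact E_not_mem hσ' hB hC hxD
    by_cases hxne : x = -((n : ℤ) + 1)
    · subst hxne
      refine ⟨upF n B (negBlock B), ⟨Finset.mem_image_of_mem _ (hσ'.neg B hB), ?_⟩, ?_⟩
      · rw [upF_nB hσ' hB]; exact Finset.mem_insert_self _ _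
      · rintro D ⟨hD, hxD⟩
        obtain ⟨C, hC, rfl⟩ := Finset.mem_image.1 hD
        congr 1
        by_cases h2 : C = negBlock B
        · exact h2
        · exfalso
          by_cases h1 : C = B
          · subst h1
            rw [upF_B hσ' hB] at hxD
            rcases Finset.mem_insert.1 hxD with h | h
            · omega
            · exact nE_not_mem hσ' hB hC h
          · rw [upF_other hσ' hB h1 h2] at hxD
            exact nE_not_mem hσ' hB hC hxD
    · have hxn : x ∈ pmSet n := mem_pm_iff.2 ⟨hx, hxe, hxne⟩
      obtain ⟨C₀, ⟨hC₀, hxC₀⟩, hu⟩ := hσ'.exu x hxn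
      refine ⟨upF n B C₀, ⟨Finset.mem_image_of_mem _ hC₀, upF_superset hσ' hB hxC₀⟩, ?_⟩
      rintro D ⟨hD, hxD⟩
      obtain ⟨C, hC, rfl⟩ := Finset.mem_image.1 hD
      rcases upF_sub_cases hσ' hB hxD with h | h | h
      · rw [hu C ⟨hC, h⟩]
      · exact absurd h hxe
      · exact absurd h hxne
  · intro D hD
    obtain ⟨C, hC, rfl⟩ := Finset.mem_image.1 hD
    rw [negBlock_upF hσ' hB hC]
    exact Finset.mem_image_of_mem _ (hσ'.neg C hC)
  · intro D hD
    obtain ⟨C, hC, rfl⟩ := Finset.mem_image.1 hD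
    rw [negBlock_upF hσ' hB hC]
    intro hcon
    exact hσ'.nz C hC (upF_inj hσ' hB (hσ'.neg C hC) hC hcon)

lemma up_card : (up n σ' B).card = σ'.card :=
  Finset.card_image_of_injOn (fun C hC C' hC' h => upF_inj hσ' hB hC hC' h)

lemma sing_not_mem_up : ({((n : ℤ) + 1)} : Finset ℤ) ∉ up n σ' B := by
  intro hc
  obtain ⟨C, hC, hCE⟩ := Finset.mem_image.1 hc
  obtain ⟨x, hx⟩ := hσ'.nonempty C hC
  have hx1 : x ∈ ({((n : ℤ) + 1)} : Finset ℤ) := hCE ▸ upF_superset hσ' hB hx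
  rw [Finset.mem_singleton] at hx1
  exact pm_not_mem_e (hx1 ▸ hσ'.subset C hC hx)

lemma dB_upF_B : dB n (upF n B B) = B := by
  rw [upF_B hσ' hB, dB, Finset.erase_insert (E_not_mem hσ' hB hB),
    Finset.erase_eq_of_notMem (nE_not_mem hσ' hB hB)]

lemma dB_upF_nB : dB n (upF n B (negBlock B)) = negBlock B := by
  have h1 : ((n : ℤ) + 1) ∉ insert (-((n : ℤ) + 1)) (negBlock B) := by
    rw [Finset.mem_insert]
    push_neg
    constructor
    · omega
    · exact E_not_mem hσ' hB (hσ'.neg B hB)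
  rw [upF_nB hσ' hB, dB, Finset.erase_eq_of_notMem h1,
    Finset.erase_insert (nE_not_mem hσ' hB (hσ'.neg B hB))]

lemma dB_upF (C : Finset ℤ) (hC : C ∈ σ') : dB n (upF n B C) = C := by
  by_cases h1 : C = B
  · subst h1; exact dB_upF_B hσ' hB
  by_cases h2 : C = negBlock B
  · subst h2; exact dB_upF_nB hσ' hB
  · rw [upF_other hσ' hB h1 h2, dB, Finset.erase_eq_of_notMem (E_not_mem hσ' hB hC),
      Finset.erase_eq_of_notMem (nE_not_mem hσ' hB hC)]

lemma down_up : down n (up n σ' B) = σ' := by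
  ext D
  simp only [down, up, Finset.mem_image, exists_exists_and_eq_and]
  constructor
  · rintro ⟨C, hC, rfl⟩
    rw [dB_upF hσ' hB C hC]
    exact hC
  · intro hD
    exact ⟨D, hD, dB_upF hσ' hB D hD⟩

end UpFacts

end Insertion2

end Wilf
namespace Wilf
open Finset
open scoped Classical

section Insertion3

variable {n : ℕ}

lemma up_down {σ : Finset (Finset ℤ)} (hσ : IsPart (pmSet (n + 1)) σ)
    (hsing : ({((n : ℤ) + 1)} : Finset ℤ) ∉ σ) :
    up n (down n σ) (dB n (blkOf σ ((n : ℤ) + 1))) = σ := by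
  set E : ℤ := (n : ℤ) + 1 with hEdef
  obtain ⟨hBe1, hBe2⟩ := blkOf_spec hσ (pm_mem_e (n := n))
  set Be : Finset ℤ := blkOf σ E with hBedef
  have hnBe : negBlock Be ∈ σ := hσ.neg Be hBe1
  have hBenB : Be ≠ negBlock Be := fun h => hσ.nz Be hBe1 h.symm
  have hnEBe : -E ∉ Be := hσ.not_neg_mem hBe1 hBe2
  have c1 : dB n Be = Be.erase E := by
    rw [dB, Finset.erase_eq_of_notMem]
    intro hc
    exact hnEBe (Finset.mem_of_mem_erase hc)
  have c2 : insert E (dB n Be) = Be := by rw [c1, Finset.insert_erase hBe2]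
  have c3 : E ∉ negBlock Be := by
    rw [mem_negBlock]
    exact fun hc => hnEBe (by simpa using hσ.not_neg_mem hBe1 hBe2 hc)
  have c4 : -E ∈ negBlock Be := by rw [mem_negBlock, neg_neg]; exact hBe2
  have c5 : dB n (negBlock Be) = (negBlock Be).erase (-E) := by
    rw [dB, Finset.erase_eq_of_notMem c3]
  have c6 : insert (-E) (dB n (negBlock Be)) = negBlock Be := by
    rw [c5, Finset.insert_erase c4]
  have c7 : negBlock (dB n Be) = dB n (negBlock Be) := negBlock_dB
  have hdBne : (dB n Be).Nonempty := dB_nonempty hσ hsing hBe1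
  have hdBnBne : (dB n (negBlock Be)).Nonempty := dB_nonempty hσ hsing hnBe
  have key : ∀ C ∈ σ, upF n (dB n Be) (dB n C) = C := by
    intro C hC
    by_cases h1 : C = Be
    · subst h1
      rw [upF, if_pos rfl, c2]
    by_cases h2 : C = negBlock Be
    · subst h2
      have hne : dB n (negBlock Be) ≠ dB n Be :=
        fun h => h1 (dB_inj hσ hsing hnBe hBe1 h)
      rw [upF, if_neg hne, if_pos c7.symm, c6]
    · -- C contains neither E nor -E
      have hEC : E ∉ C := by
        intro hc
        exact h1 (hσ.eq_of_mem hC hBe1 hc hBe2)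
      have hnEC : -E ∉ C := by
        intro hc
        exact h2 (hσ.eq_of_mem hC hnBe hc c4)
      have hdC : dB n C = C := by
        rw [dB, Finset.erase_eq_of_notMem hEC, Finset.erase_eq_of_notMem hnEC]
      have hb1 : dB n C ≠ dB n Be := fun h => h1 (dB_inj hσ hsing hC hBe1 h)
      have hb2 : dB n C ≠ negBlock (dB n Be) := by
        rw [c7]
        exact fun h => h2 (dB_inj hσ hsing hC hnBe h)
      rw [upF, if_neg hb1, if_neg hb2, hdC]
  ext D
  simp only [up, down, Finset.mem_image, exists_exists_and_eq_and]
  constructor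
  · rintro ⟨C, hC, rfl⟩
    rw [key C hC]
    exact hC
  · intro hD
    exact ⟨D, hD, key D hD⟩

lemma bij2 (k : ℕ) :
    (((parts (pmSet (n + 1))).filter
        (fun σ => σ.card = 2 * (k + 1) ∧ ({((n : ℤ) + 1)} : Finset ℤ) ∉ σ))).card
      = 2 * (k + 1) * Mcnt n (k + 1) := by
  have hT : (((parts (pmSet n)).filter (fun σ' => σ'.card = 2 * (k + 1))).sigma
      (fun σ' => σ')).card = 2 * (k + 1) * Mcnt n (k + 1) := by
    rw [Finset.card_sigma,
      Finset.sum_congr rfl (fun σ' hσ' => (Finset.mem_filter.1 hσ').2),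
      Finset.sum_const, smul_eq_mul, Mcnt]
    ring
  rw [← hT]
  apply Finset.card_bij' (fun σ _ => ⟨down n σ, dB n (blkOf σ ((n : ℤ) + 1))⟩)
    (fun p _ => up n p.1 p.2)
  · -- left inverse
    intro σ hσm
    rw [Finset.mem_filter] at hσm
    obtain ⟨hσp, _, hsing⟩ := hσm
    exact up_down (mem_parts.1 hσp) hsing
  · -- right inverse
    intro p hp
    obtain ⟨σ', B⟩ := p
    rw [Finset.mem_sigma, Finset.mem_filter] at hp
    obtain ⟨⟨hσ'p, _⟩, hB⟩ := hp
    have hσ' := mem_parts.1 hσ'p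
    have h1 : down n (up n σ' B) = σ' := down_up hσ' hB
    have h2 : blkOf (up n σ' B) ((n : ℤ) + 1) = upF n B B := by
      apply blkOf_eq (up_isPart hσ' hB) (Finset.mem_image_of_mem _ hB)
      rw [upF_B hσ' hB]
      exact Finset.mem_insert_self _ _
    have h3 : dB n (blkOf (up n σ' B) ((n : ℤ) + 1)) = B := by
      rw [h2]
      exact dB_upF_B hσ' hB
    exact Sigma.ext h1 (heq_of_eq h3)
  · -- forward membership
    intro σ hσm
    rw [Finset.mem_filter] at hσm
    obtain ⟨hσp, hcard, hsing⟩ := hσm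
    have hσ := mem_parts.1 hσp
    rw [Finset.mem_sigma, Finset.mem_filter]
    refine ⟨⟨mem_parts.2 (down_isPart hσ hsing), ?_⟩, ?_⟩
    · rw [down_card hσ hsing, hcard]
    · exact Finset.mem_image_of_mem _ (blkOf_spec hσ (pm_mem_e (n := n))).1
  · -- backward membership
    intro p hp
    obtain ⟨σ', B⟩ := p
    rw [Finset.mem_sigma, Finset.mem_filter] at hp
    obtain ⟨⟨hσ'p, hcard⟩, hB⟩ := hp
    have hσ' := mem_parts.1 hσ'p
    rw [Finset.mem_filter]
    refine ⟨mem_parts.2 (up_isPart hσ' hB), ?_, sing_not_mem_up hσ' hB⟩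
    rw [up_card hσ' hB, hcard]

lemma Mcnt_rec (n k : ℕ) :
    Mcnt (n + 1) (k + 1) = Mcnt n k + 2 * (k + 1) * Mcnt n (k + 1) := by
  have hsplit := Finset.card_filter_add_card_filter_not
    (s := (parts (pmSet (n + 1))).filter (fun σ => σ.card = 2 * (k + 1)))
    (p := fun σ => ({((n : ℤ) + 1)} : Finset ℤ) ∈ σ)
  rw [Finset.filter_filter, Finset.filter_filter] at hsplit
  rw [Mcnt, ← hsplit, bij1 k, bij2 k]

end Insertion3

/-! ### Boundary values of Mcnt -/

lemma pmSet_zero : pmSet 0 = ∅ := by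
  ext x; rw [mem_pmSet]; simp; omega

lemma parts_empty : parts (∅ : Finset ℤ) = {∅} := by
  ext π
  rw [mem_parts, Finset.mem_singleton]
  constructor
  · intro h
    rw [Finset.eq_empty_iff_forall_notMem]
    intro B hB
    obtain ⟨x, hx⟩ := h.nonempty B hB
    exact absurd (h.subset B hB hx) (Finset.notMem_empty x)
  · rintro rfl
    constructor <;> simp

lemma Mcnt_zero_zero : Mcnt 0 0 = 1 := by
  rw [Mcnt, pmSet_zero, parts_empty]
  rw [Finset.filter_singleton]
  simp

lemma Mcnt_gt {n k : ℕ} (h : n < k) : Mcnt n k = 0 := by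
  rw [Mcnt, Finset.card_eq_zero, Finset.filter_eq_empty_iff]
  intro σ hσm
  have h1 := card_le_of_parts (mem_parts.1 hσm)
  rw [card_pmSet] at h1
  omega

lemma Mcnt_zero_left {n : ℕ} (h : 1 ≤ n) : Mcnt n 0 = 0 := by
  rw [Mcnt, Finset.card_eq_zero, Finset.filter_eq_empty_iff]
  intro σ hσm hc
  rw [Nat.mul_zero, Finset.card_eq_zero] at hc
  subst hc
  have h1 : (1 : ℤ) ∈ pmSet n := by rw [mem_pmSet]; omega
  obtain ⟨B, ⟨hB, _⟩, _⟩ := (mem_parts.1 hσm).exu 1 h1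
  exact absurd hB (Finset.notMem_empty B)

lemma card_botG {G : Finset ℤ} : (botG G).card = G.card := by
  apply Finset.card_image_of_injOn
  intro x _ y _ h
  rwa [Finset.singleton_inj] at h

lemma Mcnt_diag (n : ℕ) : Mcnt n n = 1 := by
  rw [Mcnt]
  have hbot : botG (pmSet n) ∈ (parts (pmSet n)).filter (fun σ => σ.card = 2 * n) := by
    rw [Finset.mem_filter]
    refine ⟨mem_parts.2 (isPart_botG (sym_pmSet n)), ?_⟩
    rw [card_botG, card_pmSet]
  have huniq : ∀ σ ∈ (parts (pmSet n)).filter (fun σ => σ.card = 2 * n),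
      σ = botG (pmSet n) := by
    intro σ hσm
    rw [Finset.mem_filter] at hσm
    obtain ⟨hσp, hcard⟩ := hσm
    have hσ := mem_parts.1 hσp
    have hdisj : ∀ B ∈ σ, ∀ C ∈ σ, B ≠ C → Disjoint B C := by
      intro B hB C hC hne
      rw [Finset.disjoint_left]
      intro x hxB hxC
      exact hne (hσ.eq_of_mem hB hC hxB hxC)
    have hbi : (σ.biUnion fun B => B) = pmSet n := by
      apply Finset.Subset.antisymm
      · intro x hx
        obtain ⟨B, hB, hxB⟩ := Finset.mem_biUnion.1 hx
        exact hσ.subset B hB hxB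
      · intro x hx
        obtain ⟨B, ⟨hB, hxB⟩, _⟩ := hσ.exu x hx
        exact Finset.mem_biUnion.2 ⟨B, hB, hxB⟩
    have hsum : ∑ B ∈ σ, B.card = 2 * n := by
      rw [← Finset.card_biUnion hdisj]
      rw [hbi, card_pmSet]
    have hone : ∀ B ∈ σ, B.card = 1 := by
      have hle : ∀ B ∈ σ, 1 ≤ B.card :=
        fun B hB => Finset.card_pos.2 (hσ.nonempty B hB)
      have heq : ∑ B ∈ σ, (1 : ℕ) = ∑ B ∈ σ, B.card := by
        rw [Finset.sum_const, smul_eq_mul, mul_one, hcard, hsum]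
      intro B hB
      exact ((Finset.sum_eq_sum_iff_of_le hle).1 heq B hB).symm
    apply Finset.eq_of_subset_of_card_le
    · intro B hB
      obtain ⟨x, hx⟩ := Finset.card_eq_one.1 (hone B hB)
      subst hx
      exact mem_botG.2 ⟨x, hσ.subset _ hB (Finset.mem_singleton_self x), rfl⟩
    · rw [card_botG, card_pmSet, hcard]
  have : (parts (pmSet n)).filter (fun σ => σ.card = 2 * n) = {botG (pmSet n)} := by
    apply Finset.Subset.antisymm
    · intro σ hσ
      rw [Finset.mem_singleton]
      exact huniq σ hσ
    · intro σ hσ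
      rw [Finset.mem_singleton] at hσ
      exact hσ ▸ hbot
  rw [this, Finset.card_singleton]

end Wilf
namespace Wilf
open Finset Polynomial
open scoped Classical

noncomputable def Pk (k : ℕ) : Polynomial ℤ :=
  ∏ i ∈ Finset.range k, (X - C (2 * (i : ℤ)))

lemma Pk_succ (k : ℕ) : Pk (k + 1) = Pk k * (X - C (2 * (k : ℤ))) :=
  Finset.prod_range_succ _ k

lemma Pk_zero : Pk 0 = 1 := by rw [Pk, Finset.range_zero, Finset.prod_empty]

noncomputable def Qk (k : ℕ) : Polynomial ℤ :=
  ∏ i ∈ Finset.range k, (X - C ((i : ℤ)))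

lemma Qk_succ (k : ℕ) : Qk (k + 1) = Qk k * (X - C ((k : ℤ))) :=
  Finset.prod_range_succ _ k

lemma Qk_zero : Qk 0 = 1 := by rw [Qk, Finset.range_zero, Finset.prod_empty]

lemma stirling1_eq (k j : ℕ) : stirling1 k j = (Qk k).coeff j := rfl

lemma coeff_mul_X_sub_C_zero (p : Polynomial ℤ) (a : ℤ) :
    (p * (X - C a)).coeff 0 = -(a * p.coeff 0) := by
  rw [mul_sub, Polynomial.coeff_sub, Polynomial.coeff_mul_X_zero, Polynomial.coeff_mul_C]
  ring

lemma coeff_mul_X_sub_C_succ (p : Polynomial ℤ) (a : ℤ) (j : ℕ) :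
    (p * (X - C a)).coeff (j + 1) = p.coeff j - a * p.coeff (j + 1) := by
  rw [mul_sub, Polynomial.coeff_sub, Polynomial.coeff_mul_X, Polynomial.coeff_mul_C]
  ring

lemma stirling1_succ_zero (k : ℕ) :
    stirling1 (k + 1) 0 = -((k : ℤ) * stirling1 k 0) := by
  rw [stirling1_eq, stirling1_eq, Qk_succ, coeff_mul_X_sub_C_zero]

lemma stirling1_succ (k j : ℕ) :
    stirling1 (k + 1) (j + 1) = stirling1 k j - (k : ℤ) * stirling1 k (j + 1) := by
  rw [stirling1_eq, stirling1_eq, stirling1_eq, Qk_succ, coeff_mul_X_sub_C_succ]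

lemma stirling1_eq_zero {k j : ℕ} (h : k < j) : stirling1 k j = 0 := by
  rw [stirling1_eq]
  apply Polynomial.coeff_eq_zero_of_natDegree_lt
  unfold Qk
  calc (∏ i ∈ Finset.range k, (X - C ((i : ℤ)))).natDegree ≤ ∑ i ∈ Finset.range k, (X - C ((i : ℤ))).natDegree :=
    Polynomial.natDegree_prod_le _ _
  _ ≤ ∑ _i ∈ Finset.range k, 1 := by
      apply Finset.sum_le_sum
      intro i _
      rw [Polynomial.natDegree_X_sub_C]
  _ = k := by rw [Finset.sum_const, smul_eq_mul, mul_one, Finset.card_range]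
  _ < j := h

lemma coeff_Pk (k : ℕ) : ∀ j, (Pk k).coeff j = 2 ^ (k - j) * stirling1 k j := by
  induction k with
  | zero =>
    intro j
    rw [Pk_zero, stirling1_eq, Qk_zero, Nat.zero_sub, pow_zero, one_mul]
  | succ k ih =>
    intro j
    cases j with
    | zero =>
      rw [Pk_succ, coeff_mul_X_sub_C_zero, ih 0, stirling1_succ_zero,
        Nat.sub_zero, Nat.sub_zero, pow_succ]
      ring
    | succ j =>
      rw [Pk_succ, coeff_mul_X_sub_C_succ, ih j, ih (j + 1), stirling1_succ]
      have hsub : (k + 1) - (j + 1) = k - j := by omega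
      rw [hsub]
      have hkey : (2 * (k : ℤ)) * (2 ^ (k - (j + 1)) * stirling1 k (j + 1))
          = (k : ℤ) * (2 ^ (k - j) * stirling1 k (j + 1)) := by
        by_cases hjk : j + 1 ≤ k
        · have h2 : k - j = (k - (j + 1)) + 1 := by omega
          rw [h2, pow_succ]
          ring
        · rw [stirling1_eq_zero (by omega)]
          ring
      linear_combination -hkey

lemma polyId (n : ℕ) :
    ∑ k ∈ Finset.range (n + 1), C ((Mcnt n k : ℤ)) * Pk k = (X : Polynomial ℤ) ^ n := by
  induction n with
  | zero =>
    rw [Finset.sum_range_one, Mcnt_zero_zero, Pk_zero]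
    simp
  | succ n ih =>
    rw [Finset.sum_range_succ']
    have h0 : C ((Mcnt (n + 1) 0 : ℤ)) * Pk 0 = 0 := by
      rw [Mcnt_zero_left (Nat.le_add_left 1 n)]
      simp
    rw [h0, add_zero]
    have hterm : ∀ k, C ((Mcnt (n + 1) (k + 1) : ℤ)) * Pk (k + 1)
        = C ((Mcnt n k : ℤ)) * Pk (k + 1)
          + C (((2 * (k + 1) * Mcnt n (k + 1) : ℕ) : ℤ)) * Pk (k + 1) := by
      intro k
      rw [Mcnt_rec, ← add_mul]
      congr 1
      push_cast
      rw [map_add]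
    rw [Finset.sum_congr rfl (fun k _ => hterm k), Finset.sum_add_distrib]
    have hf0 : C (((2 * 0 * Mcnt n 0 : ℕ) : ℤ)) * Pk 0 = 0 := by
      norm_num
    have hftop : C (((2 * (n + 1) * Mcnt n (n + 1) : ℕ) : ℤ)) * Pk (n + 1) = 0 := by
      rw [Mcnt_gt (Nat.lt_succ_self n)]
      norm_num
    have hsec : ∑ k ∈ Finset.range (n + 1), C (((2 * (k + 1) * Mcnt n (k + 1) : ℕ) : ℤ)) * Pk (k + 1)
        = ∑ k ∈ Finset.range (n + 1), C (((2 * k * Mcnt n k : ℕ) : ℤ)) * Pk k := by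
      have h1 := Finset.sum_range_succ' (fun k => C (((2 * k * Mcnt n k : ℕ) : ℤ)) * Pk k) (n + 1)
      have h2 := Finset.sum_range_succ (fun k => C (((2 * k * Mcnt n k : ℕ) : ℤ)) * Pk k) (n + 1)
      rw [h2] at h1
      rw [hftop, add_zero] at h1
      rw [hf0, add_zero] at h1
      exact h1.symm
    rw [hsec]
    have hcomb : ∀ k, C ((Mcnt n k : ℤ)) * Pk (k + 1) + C (((2 * k * Mcnt n k : ℕ) : ℤ)) * Pk k
        = X * (C ((Mcnt n k : ℤ)) * Pk k) := by
      intro k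
      have hz : (((2 * k * Mcnt n k : ℕ) : ℤ)) = (2 * (k : ℤ)) * ((Mcnt n k : ℤ)) := by
        push_cast
        ring
      have hrel : C (((2 * k * Mcnt n k : ℕ) : ℤ)) = C (2 * (k : ℤ)) * C ((Mcnt n k : ℤ)) := by
        rw [hz, Polynomial.C_mul]
      rw [Pk_succ, hrel]
      ring
    rw [← Finset.sum_add_distrib, Finset.sum_congr rfl (fun k _ => hcomb k), ← Finset.mul_sum, ih]
    ring

lemma orth (n j : ℕ) :
    ∑ k ∈ Finset.range (n + 1), (Mcnt n k : ℤ) * (2 ^ (k - j) * stirling1 k j)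
      = if j = n then 1 else 0 := by
  have h2 := congrArg (fun p : Polynomial ℤ => p.coeff j) (polyId n)
  simp only [Polynomial.finset_sum_coeff, Polynomial.coeff_C_mul, coeff_Pk,
    Polynomial.coeff_X_pow] at h2
  exact h2

end Wilf
namespace Wilf
open Finset
open scoped Classical

lemma isBn_iff {n : ℕ} {π : Finset (Finset ℤ)} :
    IsBnPartition n π ∧ NoZeroBlock π ↔ IsPart (pmSet n) π := by
  constructor
  · rintro ⟨⟨h1, h2, h3, h4, _⟩, h6⟩
    exact ⟨h2, fun B hB => Finset.nonempty_iff_ne_empty.2 (h1 B hB), h3, h4, h6⟩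
  · intro h
    refine ⟨⟨fun B hB => Finset.nonempty_iff_ne_empty.1 (h.nonempty B hB),
      h.subset, h.exu, h.neg, ?_⟩, h.nz⟩
    have hfe : π.filter (fun B => negBlock B = B) = ∅ := by
      rw [Finset.filter_eq_empty_iff]
      intro B hB
      exact h.nz B hB
    rw [hfe]
    simp

lemma ncard_parts_eq (j : ℕ) :
    Set.ncard {π : Finset (Finset ℤ) | IsBnPartition j π ∧ NoZeroBlock π}
      = Ncnt (pmSet j) := by
  have hset : {π : Finset (Finset ℤ) | IsBnPartition j π ∧ NoZeroBlock π}
      = ↑(parts (pmSet j)) := by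
    ext π
    simp only [Set.mem_setOf_eq, Finset.mem_coe, mem_parts]
    exact isBn_iff
  rw [hset, Set.ncard_coe_finset, Ncnt]

lemma ncard_tuples_eq (n r : ℕ) :
    Set.ncard {πs : Fin r → Finset (Finset ℤ) |
        (∀ t, IsBnPartition n (πs t) ∧ NoZeroBlock (πs t)) ∧ MinIntFam n πs}
      = Lcnt (pmSet n) r := by
  have hset : {πs : Fin r → Finset (Finset ℤ) |
      (∀ t, IsBnPartition n (πs t) ∧ NoZeroBlock (πs t)) ∧ MinIntFam n πs}
        = ↑(tuples (pmSet n) r) := by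
    ext πs
    simp only [Set.mem_setOf_eq, Finset.mem_coe, mem_tuples]
    constructor
    · rintro ⟨h1, h2⟩
      exact ⟨fun t => isBn_iff.1 (h1 t), h2⟩
    · rintro ⟨h1, h2⟩
      exact ⟨fun t => isBn_iff.2 (h1 t), h2⟩
  rw [hset, Set.ncard_coe_finset, Lcnt]

lemma main_aux (r : ℕ) (hr : 1 ≤ r) :
    ∀ n, 1 ≤ n → (Lcnt (pmSet n) r : ℤ)
      = ∑ j ∈ Finset.Icc 1 n, (Ncnt (pmSet j) : ℤ) ^ r * 2 ^ (n - j) * stirling1 n j := by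
  intro n
  induction n using Nat.strong_induction_on with
  | _ n ih =>
    intro hn
    have hA : ((Ncnt (pmSet n) : ℤ)) ^ r
        = ∑ k ∈ Finset.range (n + 1), (Mcnt n k : ℤ) * (Lcnt (pmSet k) r : ℤ) := by
      have h := keyA n hr
      have h2 := congrArg (fun m : ℕ => (m : ℤ)) h
      push_cast at h2
      exact h2
    have hC : ((Ncnt (pmSet n) : ℤ)) ^ r
        = ∑ k ∈ Finset.range (n + 1), (Mcnt n k : ℤ)
            * (∑ j ∈ Finset.Icc 1 k,
                (Ncnt (pmSet j) : ℤ) ^ r * 2 ^ (k - j) * stirling1 k j) := by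
      have hext : ∀ k ∈ Finset.range (n + 1),
          (Mcnt n k : ℤ) * (∑ j ∈ Finset.Icc 1 k,
              (Ncnt (pmSet j) : ℤ) ^ r * 2 ^ (k - j) * stirling1 k j)
            = ∑ j ∈ Finset.Icc 1 n,
                (Ncnt (pmSet j) : ℤ) ^ r * ((Mcnt n k : ℤ) * (2 ^ (k - j) * stirling1 k j)) := by
        intro k hk
        rw [Finset.mem_range] at hk
        rw [Finset.mul_sum]
        rw [Finset.sum_subset (Finset.Icc_subset_Icc_right (show k ≤ n by omega))
          (fun j hj hnot => ?_)]
        · apply Finset.sum_congr rfl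
          intro j _
          ring
        · rw [Finset.mem_Icc] at hj hnot
          push_neg at hnot
          rw [stirling1_eq_zero (show k < j by omega)]
          ring
      rw [Finset.sum_congr rfl hext, Finset.sum_comm]
      have hinner : ∀ j ∈ Finset.Icc 1 n,
          ∑ k ∈ Finset.range (n + 1),
              (Ncnt (pmSet j) : ℤ) ^ r * ((Mcnt n k : ℤ) * (2 ^ (k - j) * stirling1 k j))
            = if j = n then (Ncnt (pmSet j) : ℤ) ^ r else 0 := by
        intro j _
        rw [← Finset.mul_sum, orth n j]
        rw [mul_ite, mul_one, mul_zero]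
      rw [Finset.sum_congr rfl hinner, Finset.sum_ite_eq' (Finset.Icc 1 n) n
        (fun j => (Ncnt (pmSet j) : ℤ) ^ r)]
      rw [if_pos (Finset.mem_Icc.2 ⟨hn, le_refl n⟩)]
    have hEq : ∑ k ∈ Finset.range (n + 1), (Mcnt n k : ℤ) * (Lcnt (pmSet k) r : ℤ)
        = ∑ k ∈ Finset.range (n + 1), (Mcnt n k : ℤ)
            * (∑ j ∈ Finset.Icc 1 k,
                (Ncnt (pmSet j) : ℤ) ^ r * 2 ^ (k - j) * stirling1 k j) :=
      hA.symm.trans hC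
    rw [Finset.sum_range_succ, Finset.sum_range_succ] at hEq
    have hdiag : ((Mcnt n n : ℕ) : ℤ) = 1 := by rw [Mcnt_diag]; norm_num
    rw [hdiag, one_mul, one_mul] at hEq
    have hprev : ∑ k ∈ Finset.range n, (Mcnt n k : ℤ) * (Lcnt (pmSet k) r : ℤ)
        = ∑ k ∈ Finset.range n, (Mcnt n k : ℤ)
            * (∑ j ∈ Finset.Icc 1 k,
                (Ncnt (pmSet j) : ℤ) ^ r * 2 ^ (k - j) * stirling1 k j) := by
      apply Finset.sum_congr rfl
      intro k hk
      rw [Finset.mem_range] at hk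
      rcases Nat.eq_zero_or_pos k with rfl | hk1
      · have h0 : Mcnt n 0 = 0 := Mcnt_zero_left hn
        rw [h0]
        norm_num
      · rw [ih k hk hk1]
    rw [hprev] at hEq
    exact add_left_cancel hEq

end Wilf


/-- Type-B analogue of Wilf's formula: `N_{n,r}^D = Σ_{j=1}^n Nⱼʳ 2^{n-j} s(n,j)`. -/
theorem stmt13 (n r : ℕ) (hn : 1 ≤ n) (hr : 2 ≤ r) :
    (Set.ncard {πs : Fin r → Finset (Finset ℤ) |
        (∀ t, IsBnPartition n (πs t) ∧ NoZeroBlock (πs t)) ∧ MinIntFam n πs} : ℤ)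
      = ∑ j ∈ Finset.Icc 1 n,
          (Set.ncard {π : Finset (Finset ℤ) | IsBnPartition j π ∧ NoZeroBlock π} : ℤ) ^ r
            * 2 ^ (n - j) * stirling1 n j := by
  rw [Wilf.ncard_tuples_eq n r, Wilf.main_aux r (by omega) n hn]
  apply Finset.sum_congr rfl
  intro j _
  rw [Wilf.ncard_parts_eq j]
end

section
/- For every integer n ≥ 1, the number |Π_n^B| of B_n-partitions (the Dowling number) is given by the convergent series |Π_n^B| = (1/√e) · Σ_{k≥0} (2k+1)^n / (2k)!!. -/
open scoped BigOperators

namespace Stmt16Aux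

lemma mem_pmSet {n : ℕ} {x : ℤ} : x ∈ pmSet n ↔ x ≠ 0 ∧ -(n:ℤ) ≤ x ∧ x ≤ n := by
  simp [pmSet, Finset.mem_erase, Finset.mem_Icc, and_assoc]

lemma neg_mem_pmSet {n : ℕ} {x : ℤ} (h : x ∈ pmSet n) : -x ∈ pmSet n := by
  rw [mem_pmSet] at *; omega

lemma mem_negBlock {B : Finset ℤ} {x : ℤ} : x ∈ negBlock B ↔ -x ∈ B := by
  constructor
  · rintro h; rcases Finset.mem_image.1 h with ⟨y, hy, rfl⟩; simpa using hy
  · intro h; exact Finset.mem_image.2 ⟨-x, h, by ring⟩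

lemma negBlock_negBlock (B : Finset ℤ) : negBlock (negBlock B) = B := by
  ext x; simp [mem_negBlock]

lemma negBlock_injective : Function.Injective negBlock :=
  Function.LeftInverse.injective negBlock_negBlock

section partition
variable {n : ℕ} {π : Finset (Finset ℤ)}

lemma block_unique (hπ : IsBnPartition n π) {B C : Finset ℤ} (hB : B ∈ π) (hC : C ∈ π)
    {x : ℤ} (hxB : x ∈ B) (hxC : x ∈ C) : B = C := by
  have hx : x ∈ pmSet n := hπ.2.1 B hB hxB
  obtain ⟨U, _, hU⟩ := hπ.2.2.1 x hx
  rw [hU B ⟨hB, hxB⟩, hU C ⟨hC, hxC⟩]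

lemma exists_block (hπ : IsBnPartition n π) {x : ℤ} (hx : x ∈ pmSet n) :
    ∃ B ∈ π, x ∈ B := by
  obtain ⟨B, hB, -⟩ := hπ.2.2.1 x hx; exact ⟨B, hB.1, hB.2⟩

lemma selfneg_unique (hπ : IsBnPartition n π) {B C : Finset ℤ} (hB : B ∈ π) (hC : C ∈ π)
    (hB' : negBlock B = B) (hC' : negBlock C = C) : B = C := by
  classical
  have h := hπ.2.2.2.2
  exact Finset.card_le_one.1 h B (Finset.mem_filter.2 ⟨hB, hB'⟩) C (Finset.mem_filter.2 ⟨hC, hC'⟩)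

end partition

/-- canonical representative element of the pair `B ∪ -B`. -/
def bkey (B : Finset ℤ) : ℤ := WithBot.unbotD 0 ((B ∪ negBlock B).max)

lemma bkey_mem {B : Finset ℤ} (h : B.Nonempty) : bkey B ∈ B ∪ negBlock B := by
  classical
  have hne : B ∪ negBlock B ≠ ∅ := by
    intro he
    rcases h with ⟨x, hx⟩
    have : x ∈ B ∪ negBlock B := Finset.mem_union_left _ hx
    simp [he] at this
  have : (B ∪ negBlock B).max ≠ ⊥ := fun hb => hne (Finset.max_eq_bot.1 hb)
  rcases WithBot.ne_bot_iff_exists.1 this with ⟨m, hm⟩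
  have := Finset.mem_of_max hm.symm
  simpa [bkey, ← hm] using this

lemma bkey_negBlock (B : Finset ℤ) : bkey (negBlock B) = bkey B := by
  unfold bkey
  rw [negBlock_negBlock, Finset.union_comm]

/-- The chosen transversal of the block pairs of `π`. -/
def Tset (π : Finset (Finset ℤ)) : Finset (Finset ℤ) :=
  π.filter (fun B => negBlock B ≠ B ∧ bkey B ∈ B)

section tset
variable {n : ℕ} {π : Finset (Finset ℤ)}

lemma Tset_mem_iff {B : Finset ℤ} :
    B ∈ Tset π ↔ B ∈ π ∧ negBlock B ≠ B ∧ bkey B ∈ B := by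
  simp [Tset]

lemma not_negBlock_mem_Tset (hπ : IsBnPartition n π) {B : Finset ℤ} (hB : B ∈ Tset π) :
    negBlock B ∉ Tset π := by
  rw [Tset_mem_iff] at hB
  rw [Tset_mem_iff]
  rintro ⟨h1, h2, h3⟩
  rw [bkey_negBlock] at h3
  exact hB.2.1 (block_unique hπ h1 hB.1 h3 hB.2.2)

lemma mem_Tset_or (hπ : IsBnPartition n π) {B : Finset ℤ} (hB : B ∈ π)
    (hne : negBlock B ≠ B) : B ∈ Tset π ∨ negBlock B ∈ Tset π := by
  have hBne : B.Nonempty := Finset.nonempty_iff_ne_empty.2 (hπ.1 B hB)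
  rcases Finset.mem_union.1 (bkey_mem hBne) with h | h
  · exact Or.inl (Tset_mem_iff.2 ⟨hB, hne, h⟩)
  · refine Or.inr (Tset_mem_iff.2 ⟨hπ.2.2.2.1 B hB, ?_, ?_⟩)
    · rw [negBlock_negBlock]; exact fun he => hne he.symm
    · rw [bkey_negBlock]; exact h

lemma selfneg_of_not_Tset (hπ : IsBnPartition n π) {B : Finset ℤ} (hB : B ∈ π)
    (h1 : B ∉ Tset π) (h2 : negBlock B ∉ Tset π) : negBlock B = B := by
  by_contra hne
  rcases mem_Tset_or hπ hB hne with h | h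
  · exact h1 h
  · exact h2 h

lemma filter_card_eq_two_mul_Tset (hπ : IsBnPartition n π) :
    (π.filter (fun B => negBlock B ≠ B)).card = 2 * (Tset π).card := by
  classical
  have himg : ∀ B : Finset ℤ, B ∈ (Tset π).image negBlock ↔ negBlock B ∈ Tset π := by
    intro B
    constructor
    · rintro h; rcases Finset.mem_image.1 h with ⟨C, hC, rfl⟩
      rwa [negBlock_negBlock]
    · intro h; exact Finset.mem_image.2 ⟨negBlock B, h, negBlock_negBlock B⟩
  have hset : π.filter (fun B => negBlock B ≠ B) = Tset π ∪ (Tset π).image negBlock := by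
    ext B
    rw [Finset.mem_union, Finset.mem_filter, himg, Tset_mem_iff, Tset_mem_iff]
    constructor
    · rintro ⟨hB, hne⟩
      rcases mem_Tset_or hπ hB hne with h | h
      · exact Or.inl (Tset_mem_iff.1 h)
      · exact Or.inr (Tset_mem_iff.1 h)
    · rintro (⟨h1, h2, -⟩ | ⟨h1, h2, -⟩)
      · exact ⟨h1, h2⟩
      · refine ⟨?_, ?_⟩
        · have := negBlock_negBlock B ▸ hπ.2.2.2.1 _ h1
          exact this
        · intro he; apply h2; rw [negBlock_negBlock, he]
  have hdisj : Disjoint (Tset π) ((Tset π).image negBlock) := by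
    rw [Finset.disjoint_left]
    intro B hB hB'
    exact not_negBlock_mem_Tset hπ hB ((himg B).1 hB')
  rw [hset, Finset.card_union_of_disjoint hdisj,
    Finset.card_image_of_injective _ negBlock_injective]
  ring

end tset


section gval
variable {n : ℕ}

def fext (f : Fin n → ℤ) (m : ℕ) : ℤ := if h : m < n then f ⟨m, h⟩ else 0

def gval (f : Fin n → ℤ) (x : ℤ) : ℤ :=
  if 0 < x then fext f (x.toNat - 1) else - fext f ((-x).toNat - 1)

lemma gval_neg (f : Fin n → ℤ) {x : ℤ} (hx : x ≠ 0) : gval f (-x) = - gval f x := by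
  rcases lt_or_gt_of_ne hx with h | h
  · rw [gval, gval, if_pos (show (0:ℤ) < -x by omega), if_neg (by omega), neg_neg]
  · rw [gval, gval, if_neg (by omega), if_pos h, neg_neg]

lemma gval_idx (f : Fin n → ℤ) (i : Fin n) : gval f ((i : ℤ) + 1) = f i := by
  rw [gval, if_pos (by omega), fext]
  have h1 : ((i : ℤ) + 1).toNat - 1 = (i : ℕ) := by omega
  rw [h1, dif_pos i.isLt]

lemma gval_mem {k : ℕ} {f : Fin n → ℤ}
    (hf : f ∈ Fintype.piFinset (fun _ : Fin n => Finset.Icc (-(k:ℤ)) k))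
    {x : ℤ} (hx : x ∈ pmSet n) : gval f x ∈ Finset.Icc (-(k:ℤ)) k := by
  rw [Fintype.mem_piFinset] at hf
  rw [mem_pmSet] at hx
  have hbnd : ∀ i : Fin n, -(k:ℤ) ≤ f i ∧ f i ≤ k := by
    intro i; have := hf i; rw [Finset.mem_Icc] at this; exact this
  rw [Finset.mem_Icc, gval]
  split_ifs with h
  · have hlt : x.toNat - 1 < n := by omega
    rw [fext, dif_pos hlt]; exact hbnd _
  · have hlt : (-x).toNat - 1 < n := by omega
    rw [fext, dif_pos hlt]
    have := hbnd ⟨(-x).toNat - 1, hlt⟩; omega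

/-- The block of `x` induced by the function `f`. -/
noncomputable def blockOf (f : Fin n → ℤ) (x : ℤ) : Finset ℤ :=
  (pmSet n).filter (fun y => gval f y = gval f x)

lemma mem_blockOf {f : Fin n → ℤ} {x y : ℤ} :
    y ∈ blockOf f x ↔ y ∈ pmSet n ∧ gval f y = gval f x := by simp [blockOf]

lemma self_mem_blockOf {f : Fin n → ℤ} {x : ℤ} (hx : x ∈ pmSet n) : x ∈ blockOf f x :=
  mem_blockOf.2 ⟨hx, rfl⟩

lemma blockOf_congr {f : Fin n → ℤ} {x y : ℤ} (h : gval f x = gval f y) :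
    blockOf f x = blockOf f y := by
  unfold blockOf; rw [h]

lemma blockOf_eq_of_mem {f : Fin n → ℤ} {x y : ℤ} (h : y ∈ blockOf f x) :
    blockOf f y = blockOf f x := blockOf_congr (mem_blockOf.1 h).2

lemma negBlock_blockOf {f : Fin n → ℤ} {x : ℤ} (hx : x ≠ 0) :
    negBlock (blockOf f x) = blockOf f (-x) := by
  ext y
  rw [mem_negBlock, mem_blockOf, mem_blockOf, gval_neg f hx]
  constructor
  · rintro ⟨h1, h2⟩
    have hy : y ∈ pmSet n := by have := neg_mem_pmSet h1; rwa [neg_neg] at this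
    have hy0 : y ≠ 0 := (mem_pmSet.1 hy).1
    refine ⟨hy, ?_⟩
    rw [gval_neg f hy0] at h2
    omega
  · rintro ⟨h1, h2⟩
    have hy0 : y ≠ 0 := (mem_pmSet.1 h1).1
    exact ⟨neg_mem_pmSet h1, by rw [gval_neg f hy0]; omega⟩

/-- The `Bₙ`-partition induced by a function `f : Fin n → ℤ`. -/
noncomputable def Phi (n : ℕ) (f : Fin n → ℤ) : Finset (Finset ℤ) :=
  (pmSet n).image (fun x => blockOf f x)

lemma mem_Phi {f : Fin n → ℤ} {B : Finset ℤ} :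
    B ∈ Phi n f ↔ ∃ x ∈ pmSet n, blockOf f x = B := by simp [Phi]

lemma gval_eq_of_same_block {f : Fin n → ℤ} {B : Finset ℤ} (hB : B ∈ Phi n f)
    {x y : ℤ} (hx : x ∈ B) (hy : y ∈ B) : gval f x = gval f y := by
  rcases mem_Phi.1 hB with ⟨z, hz, rfl⟩
  rw [(mem_blockOf.1 hx).2, (mem_blockOf.1 hy).2]

lemma blockOf_mem_eq {f : Fin n → ℤ} {B : Finset ℤ} (hB : B ∈ Phi n f)
    {x : ℤ} (hx : x ∈ B) : blockOf f x = B := by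
  rcases mem_Phi.1 hB with ⟨z, hz, rfl⟩
  exact blockOf_eq_of_mem hx

lemma Phi_isBn (f : Fin n → ℤ) : IsBnPartition n (Phi n f) := by
  refine ⟨?_, ?_, ?_, ?_, ?_⟩
  · rintro B hB
    rcases mem_Phi.1 hB with ⟨x, hx, rfl⟩
    exact Finset.nonempty_iff_ne_empty.1 ⟨x, self_mem_blockOf hx⟩
  · rintro B hB
    rcases mem_Phi.1 hB with ⟨x, hx, rfl⟩
    exact Finset.filter_subset _ _
  · intro x hx
    refine ⟨blockOf f x, ⟨mem_Phi.2 ⟨x, hx, rfl⟩, self_mem_blockOf hx⟩, ?_⟩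
    rintro C ⟨hC, hxC⟩
    exact (blockOf_mem_eq hC hxC).symm
  · rintro B hB
    rcases mem_Phi.1 hB with ⟨x, hx, rfl⟩
    have hx0 : x ≠ 0 := (mem_pmSet.1 hx).1
    rw [negBlock_blockOf hx0]
    exact mem_Phi.2 ⟨-x, neg_mem_pmSet hx, rfl⟩
  · classical
    rw [Finset.card_le_one]
    have key : ∀ B ∈ Phi n f, negBlock B = B →
        B = (pmSet n).filter (fun y => gval f y = 0) := by
      intro B hB hself
      rcases mem_Phi.1 hB with ⟨x, hx, rfl⟩
      have hx0 : x ≠ 0 := (mem_pmSet.1 hx).1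
      rw [negBlock_blockOf hx0] at hself
      have hxmem : x ∈ blockOf f (-x) := hself ▸ self_mem_blockOf hx
      have h2 : gval f x = gval f (-x) := (mem_blockOf.1 hxmem).2
      rw [gval_neg f hx0] at h2
      have h0 : gval f x = 0 := by omega
      unfold blockOf; rw [h0]
    intro B hB C hC
    rw [Finset.mem_filter] at hB hC
    rw [key B hB.1 hB.2, key C hC.1 hC.2]

end gval


section cval
variable {n : ℕ} {π : Finset (Finset ℤ)}

/-- Extension of values on the transversal to all blocks (antisymmetrically). -/
def ddval (π : Finset (Finset ℤ)) (d : {B // B ∈ Tset π} → ℤ) (B : Finset ℤ) : ℤ :=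
  if h : B ∈ Tset π then d ⟨B, h⟩
  else if h' : negBlock B ∈ Tset π then - d ⟨negBlock B, h'⟩ else 0

/-- Value at a point `x`: the value of the block of `x`. -/
def cval (π : Finset (Finset ℤ)) (d : {B // B ∈ Tset π} → ℤ) (x : ℤ) : ℤ :=
  ∑ B ∈ π, if x ∈ B then ddval π d B else 0

/-- The function `Fin n → ℤ` reconstructed from block values. -/
def fOf (n : ℕ) (π : Finset (Finset ℤ)) (d : {B // B ∈ Tset π} → ℤ) : Fin n → ℤ :=
  fun i => cval π d ((i : ℤ) + 1)

variable {d : {B // B ∈ Tset π} → ℤ}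

lemma ddval_selfneg {B : Finset ℤ} (hself : negBlock B = B) : ddval π d B = 0 := by
  have h1 : B ∉ Tset π := by
    intro h; exact (Tset_mem_iff.1 h).2.1 hself
  have h2 : negBlock B ∉ Tset π := by
    intro h
    exact (Tset_mem_iff.1 h).2.1 (by simp [hself])
  rw [ddval, dif_neg h1, dif_neg h2]

lemma ddval_negBlock (hπ : IsBnPartition n π) {B : Finset ℤ} (hB : B ∈ π) :
    ddval π d (negBlock B) = - ddval π d B := by
  by_cases hT : B ∈ Tset π
  · have h1 : negBlock B ∉ Tset π := not_negBlock_mem_Tset hπ hT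
    have h2 : negBlock (negBlock B) ∈ Tset π := by rw [negBlock_negBlock]; exact hT
    rw [ddval, dif_neg h1, dif_pos h2, ddval, dif_pos hT]
    exact congrArg (fun z => -z) (congrArg d (Subtype.ext (negBlock_negBlock B)))
  · by_cases hT' : negBlock B ∈ Tset π
    · rw [ddval, dif_pos hT', ddval, dif_neg hT, dif_pos hT', neg_neg]
    · have hself : negBlock B = B := selfneg_of_not_Tset hπ hB hT hT'
      rw [hself, ddval_selfneg hself, neg_zero]

lemma cval_eq (hπ : IsBnPartition n π) {B : Finset ℤ} (hB : B ∈ π) {x : ℤ} (hx : x ∈ B) :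
    cval π d x = ddval π d B := by
  rw [cval, Finset.sum_eq_single_of_mem B hB, if_pos hx]
  intro C hC hne
  rw [if_neg]
  intro hxC
  exact hne (block_unique hπ hC hB hxC hx)

lemma cval_neg (hπ : IsBnPartition n π) {x : ℤ} (hx : x ∈ pmSet n) :
    cval π d (-x) = - cval π d x := by
  obtain ⟨B, hB, hxB⟩ := exists_block hπ hx
  have h1 : -x ∈ negBlock B := mem_negBlock.2 (by rwa [neg_neg])
  rw [cval_eq hπ (hπ.2.2.2.1 B hB) h1, cval_eq hπ hB hxB, ddval_negBlock hπ hB]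

lemma gval_fOf (hπ : IsBnPartition n π) {x : ℤ} (hx : x ∈ pmSet n) :
    gval (fOf n π d) x = cval π d x := by
  have hx' := mem_pmSet.1 hx
  rcases lt_or_gt_of_ne hx'.1 with h | h
  · have hmx : -x ∈ pmSet n := neg_mem_pmSet hx
    have hlt : (-x).toNat - 1 < n := by omega
    have he : ((((-x).toNat - 1 : ℕ) : ℤ) + 1) = -x := by omega
    have : gval (fOf n π d) x = - cval π d ((((-x).toNat - 1 : ℕ) : ℤ) + 1) := by
      rw [gval, if_neg (by omega), fext, dif_pos hlt]; rfl
    rw [this, he, cval_neg hπ hx, neg_neg]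
  · have hlt : x.toNat - 1 < n := by omega
    have he : (((x.toNat - 1 : ℕ) : ℤ) + 1) = x := by omega
    have : gval (fOf n π d) x = cval π d (((x.toNat - 1 : ℕ) : ℤ) + 1) := by
      rw [gval, if_pos (by omega), fext, dif_pos hlt]; rfl
    rw [this, he]

/-- Admissible block-value assignments. -/
noncomputable def Dset (k : ℕ) (π : Finset (Finset ℤ)) : Finset ({B // B ∈ Tset π} → ℤ) :=
  (Fintype.piFinset (fun _ => (Finset.Icc (-(k:ℤ)) k).erase 0)).filter
    (fun d => ∀ B C, |d B| = |d C| → B = C)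

lemma mem_Dset {k : ℕ} {d : {B // B ∈ Tset π} → ℤ} :
    d ∈ Dset k π ↔ (∀ B, d B ≠ 0 ∧ -(k:ℤ) ≤ d B ∧ d B ≤ k) ∧
      (∀ B C, |d B| = |d C| → B = C) := by
  simp only [Dset, Finset.mem_filter, Fintype.mem_piFinset, Finset.mem_erase,
    Finset.mem_Icc]

lemma ddval_mem {k : ℕ} (hd : d ∈ Dset k π) (B : Finset ℤ) :
    -(k:ℤ) ≤ ddval π d B ∧ ddval π d B ≤ k := by
  have h1 := (mem_Dset.1 hd).1
  by_cases h : B ∈ Tset π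
  · rw [ddval, dif_pos h]; exact (h1 ⟨B, h⟩).2
  · by_cases h' : negBlock B ∈ Tset π
    · rw [ddval, dif_neg h, dif_pos h']
      have := (h1 ⟨negBlock B, h'⟩).2; omega
    · rw [ddval, dif_neg h, dif_neg h']; omega

lemma ddval_eq_zero_iff {k : ℕ} (hπ : IsBnPartition n π) (hd : d ∈ Dset k π)
    {B : Finset ℤ} (hB : B ∈ π) : ddval π d B = 0 ↔ negBlock B = B := by
  have h1 := (mem_Dset.1 hd).1
  constructor
  · intro h0
    by_cases hT : B ∈ Tset π
    · exact absurd (by rwa [ddval, dif_pos hT] at h0) (h1 ⟨B, hT⟩).1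
    · by_cases hT' : negBlock B ∈ Tset π
      · rw [ddval, dif_neg hT, dif_pos hT'] at h0
        exact absurd (by omega) (h1 ⟨negBlock B, hT'⟩).1
      · exact selfneg_of_not_Tset hπ hB hT hT'
  · exact ddval_selfneg

lemma ddval_T {hE : ∀ _ : Unit, True} : True := trivial

lemma ddval_rep (hπ : IsBnPartition n π) {B : Finset ℤ} (hB : B ∈ π)
    (hne : negBlock B ≠ B) :
    ∃ E, ∃ _ : E ∈ Tset π, B = E ∨ B = negBlock E := by
  rcases mem_Tset_or hπ hB hne with h | h
  · exact ⟨B, h, Or.inl rfl⟩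
  · exact ⟨negBlock B, h, Or.inr (negBlock_negBlock B).symm⟩

lemma ddval_inj {k : ℕ} (hπ : IsBnPartition n π) (hd : d ∈ Dset k π)
    {B C : Finset ℤ} (hB : B ∈ π) (hC : C ∈ π)
    (he : ddval π d B = ddval π d C) : B = C := by
  have h1 := (mem_Dset.1 hd).1
  have h2 := (mem_Dset.1 hd).2
  by_cases hz : ddval π d B = 0
  · have hz' : ddval π d C = 0 := by omega
    exact selfneg_unique hπ hB hC ((ddval_eq_zero_iff hπ hd hB).1 hz)
      ((ddval_eq_zero_iff hπ hd hC).1 hz')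
  · have hneB : negBlock B ≠ B := fun h => hz (ddval_selfneg h)
    have hneC : negBlock C ≠ C := fun h => hz (by rw [he]; exact ddval_selfneg h)
    obtain ⟨E, hE, hBE⟩ := ddval_rep hπ hB hneB
    obtain ⟨F, hF, hCF⟩ := ddval_rep hπ hC hneC
    have hEπ : E ∈ π := (Tset_mem_iff.1 hE).1
    have hFπ : F ∈ π := (Tset_mem_iff.1 hF).1
    have hvB : ddval π d B = d ⟨E, hE⟩ ∨ ddval π d B = - d ⟨E, hE⟩ := by
      rcases hBE with rfl | rfl
      · left; rw [ddval, dif_pos hE]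
      · right; rw [ddval_negBlock hπ hEπ, ddval, dif_pos hE]
    have hvC : ddval π d C = d ⟨F, hF⟩ ∨ ddval π d C = - d ⟨F, hF⟩ := by
      rcases hCF with rfl | rfl
      · left; rw [ddval, dif_pos hF]
      · right; rw [ddval_negBlock hπ hFπ, ddval, dif_pos hF]
    have habsB : |ddval π d B| = |d ⟨E, hE⟩| := by
      rcases hvB with h | h <;> rw [h] <;> simp
    have habsC : |ddval π d C| = |d ⟨F, hF⟩| := by
      rcases hvC with h | h <;> rw [h] <;> simp
    have habs : |d ⟨E, hE⟩| = |d ⟨F, hF⟩| := by rw [← habsB, ← habsC, he]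
    have hEF : E = F := congrArg Subtype.val (h2 _ _ habs)
    subst hEF
    rcases hBE with rfl | rfl <;> rcases hCF with rfl | rfl
    · rfl
    · exfalso
      rw [ddval_negBlock hπ hB] at he
      exact hz (by omega)
    · exfalso
      rw [ddval_negBlock hπ hC] at he
      exact hz (by omega)
    · rfl

lemma blockOf_fOf {k : ℕ} (hπ : IsBnPartition n π) (hd : d ∈ Dset k π)
    {x : ℤ} (hx : x ∈ pmSet n) {B : Finset ℤ} (hB : B ∈ π) (hxB : x ∈ B) :
    blockOf (fOf n π d) x = B := by
  ext y
  rw [mem_blockOf]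
  constructor
  · rintro ⟨hy, hgy⟩
    obtain ⟨C, hC, hyC⟩ := exists_block hπ hy
    rw [gval_fOf hπ hy, gval_fOf hπ hx, cval_eq hπ hC hyC, cval_eq hπ hB hxB] at hgy
    rwa [ddval_inj hπ hd hC hB hgy] at hyC
  · intro hyB
    have hy := hπ.2.1 B hB hyB
    refine ⟨hy, ?_⟩
    rw [gval_fOf hπ hy, gval_fOf hπ hx, cval_eq hπ hB hyB, cval_eq hπ hB hxB]

lemma Phi_fOf {k : ℕ} (hπ : IsBnPartition n π) (hd : d ∈ Dset k π) :
    Phi n (fOf n π d) = π := by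
  ext A
  rw [mem_Phi]
  constructor
  · rintro ⟨x, hx, rfl⟩
    obtain ⟨B, hB, hxB⟩ := exists_block hπ hx
    rw [blockOf_fOf hπ hd hx hB hxB]; exact hB
  · intro hA
    obtain ⟨x, hx⟩ := Finset.nonempty_iff_ne_empty.2 (hπ.1 A hA)
    have hxp := hπ.2.1 A hA hx
    exact ⟨x, hxp, blockOf_fOf hπ hd hxp hA hx⟩

lemma fOf_mem {k : ℕ} (hπ : IsBnPartition n π) (hd : d ∈ Dset k π) :
    fOf n π d ∈ Fintype.piFinset (fun _ : Fin n => Finset.Icc (-(k:ℤ)) k) := by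
  rw [Fintype.mem_piFinset]
  intro i
  have hx : ((i : ℤ) + 1) ∈ pmSet n := by
    rw [mem_pmSet]
    have := i.isLt
    omega
  obtain ⟨B, hB, hxB⟩ := exists_block hπ hx
  have := ddval_mem hd B
  rw [Finset.mem_Icc]
  show -(k:ℤ) ≤ cval π d ((i : ℤ) + 1) ∧ cval π d ((i : ℤ) + 1) ≤ k
  rw [cval_eq hπ hB hxB]
  exact this

end cval


section counting

lemma card_Dset (k : ℕ) (π : Finset (Finset ℤ)) :
    (Dset k π).card = 2 ^ (Tset π).card * k.descFactorial (Tset π).card := by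
  classical
  set γ := {B // B ∈ Tset π}
  have hmem : ∀ d : γ → ℤ, d ∈ Dset k π ↔
      (∀ a, d a ≠ 0 ∧ -(k:ℤ) ≤ d a ∧ d a ≤ k) ∧ (∀ a b, |d a| = |d b| → a = b) :=
    fun d => mem_Dset
  have hcard : (Dset k π).card = Fintype.card ((γ → Bool) × (γ ↪ Fin k)) := by
    rw [← Finset.card_univ]
    refine Finset.card_bij'
      (fun d hd => (fun a => decide (0 < d a),
        ⟨fun a => ⟨(d a).natAbs - 1, by
          have h := ((hmem d).1 hd).1 a
          omega⟩, by
          intro a b hab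
          have h := ((hmem d).1 hd)
          apply h.2 a b
          have hval : (d a).natAbs - 1 = (d b).natAbs - 1 := congrArg Fin.val hab
          have ha := h.1 a
          have hb := h.1 b
          have : (d a).natAbs = (d b).natAbs := by omega
          simp only [Int.abs_eq_natAbs]
          exact_mod_cast this⟩))
      (fun p _ => fun a => (if p.1 a then 1 else -1) * ((p.2 a : ℕ) + 1 : ℤ))
      (fun d hd => Finset.mem_univ _)
      (fun p _ => by
        rw [hmem]
        have h1 : ∀ c, |(if p.1 c then (1:ℤ) else -1) * ((p.2 c : ℕ) + 1 : ℤ)|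
            = ((p.2 c : ℕ) : ℤ) + 1 := by
          intro c
          by_cases hc : p.1 c
          · rw [if_pos hc, one_mul, abs_of_nonneg (by positivity)]
          · rw [if_neg hc, neg_one_mul, abs_neg, abs_of_nonneg (by positivity)]
        constructor
        · intro a
          have := (p.2 a).isLt
          split_ifs <;> constructor <;> omega
        · intro a b hab
          rw [h1, h1] at hab
          have : (p.2 a : ℕ) = (p.2 b : ℕ) := by omega
          exact p.2.injective (Fin.ext this))
      (fun d hd => by
        funext a
        have h := ((hmem d).1 hd).1 a
        dsimp only
        by_cases hpos : 0 < d a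
        · rw [if_pos (by simp only [decide_eq_true_eq]; exact hpos)]
          show 1 * ((((d a).natAbs - 1 : ℕ) : ℤ) + 1) = d a
          omega
        · rw [if_neg (by simp only [decide_eq_true_eq]; omega)]
          show -1 * ((((d a).natAbs - 1 : ℕ) : ℤ) + 1) = d a
          omega)
      (fun p _ => by
        ext a
        · dsimp only
          show decide (0 < (if p.1 a then 1 else -1) * ((p.2 a : ℕ) + 1 : ℤ)) = p.1 a
          cases hb : p.1 a
          · rw [if_neg (by simp [hb])]
            simpa using by omega
          · rw [if_pos (by simp [hb])]
            simpa using by omega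
        · show (((if p.1 a then 1 else -1) * ((p.2 a : ℕ) + 1 : ℤ)).natAbs - 1 : ℕ)
            = (p.2 a : ℕ)
          split_ifs <;> omega)
  rw [hcard, Fintype.card_prod, Fintype.card_fun, Fintype.card_embedding_eq,
    Fintype.card_bool, Fintype.card_fin]
  have : Fintype.card γ = (Tset π).card := Fintype.card_coe _
  rw [this]

end counting

section fiber
variable {n : ℕ}

lemma ddval_dOf (f : Fin n → ℤ) {B : Finset ℤ} (hB : B ∈ Phi n f)
    {x : ℤ} (hxB : x ∈ B) :
    ddval (Phi n f) (fun C => gval f (bkey C.1)) B = gval f x := by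
  have hπ := Phi_isBn f
  have hxpm : x ∈ pmSet n := hπ.2.1 B hB hxB
  have hx0 : x ≠ 0 := (mem_pmSet.1 hxpm).1
  by_cases hT : B ∈ Tset (Phi n f)
  · rw [ddval, dif_pos hT]
    exact gval_eq_of_same_block hB (Tset_mem_iff.1 hT).2.2 hxB
  · by_cases hT' : negBlock B ∈ Tset (Phi n f)
    · rw [ddval, dif_neg hT, dif_pos hT']
      have hkey : bkey (negBlock B) ∈ negBlock B := (Tset_mem_iff.1 hT').2.2
      have hnB : negBlock B ∈ Phi n f := hπ.2.2.2.1 B hB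
      have hmx : -x ∈ negBlock B := mem_negBlock.2 (by rwa [neg_neg])
      have h := gval_eq_of_same_block hnB hkey hmx
      rw [gval_neg f hx0] at h
      dsimp only
      omega
    · have hself := selfneg_of_not_Tset hπ hB hT hT'
      rw [ddval_selfneg hself]
      have hmx : -x ∈ negBlock B := mem_negBlock.2 (by rwa [neg_neg])
      rw [hself] at hmx
      have h := gval_eq_of_same_block hB hmx hxB
      rw [gval_neg f hx0] at h
      omega

lemma fiber_card (k : ℕ) {π : Finset (Finset ℤ)} (hπ : IsBnPartition n π) :
    ((Fintype.piFinset (fun _ : Fin n => Finset.Icc (-(k:ℤ)) k)).filter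
      (fun f => Phi n f = π)).card = (Dset k π).card := by
  classical
  refine Finset.card_bij' (fun f _ => fun B => gval f (bkey B.1))
    (fun d _ => fOf n π d) ?_ ?_ ?_ ?_
  · -- forward lands in Dset
    intro f hf
    obtain ⟨hfF, hfπ⟩ := Finset.mem_filter.1 hf
    subst hfπ
    rw [mem_Dset]
    have hπ' := Phi_isBn f
    have keyfacts : ∀ B : {B // B ∈ Tset (Phi n f)},
        B.1 ∈ Phi n f ∧ negBlock B.1 ≠ B.1 ∧ bkey B.1 ∈ B.1 ∧ bkey B.1 ∈ pmSet n ∧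
          blockOf f (bkey B.1) = B.1 := by
      rintro ⟨B, hB⟩
      obtain ⟨h1, h2, h3⟩ := Tset_mem_iff.1 hB
      exact ⟨h1, h2, h3, hπ'.2.1 B h1 h3, blockOf_mem_eq h1 h3⟩
    constructor
    · intro B
      obtain ⟨h1, h2, h3, h4, h5⟩ := keyfacts B
      have hIcc := gval_mem hfF h4
      rw [Finset.mem_Icc] at hIcc
      refine ⟨?_, hIcc.1, hIcc.2⟩
      intro h0
      have h0' : gval f (bkey B.1) = 0 := h0
      apply h2
      have hkey0 : bkey B.1 ≠ 0 := (mem_pmSet.1 h4).1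
      have hneg : negBlock B.1 = blockOf f (-(bkey B.1)) := by
        conv_lhs => rw [← h5]
        exact negBlock_blockOf hkey0
      rw [hneg, show blockOf f (-(bkey B.1)) = blockOf f (bkey B.1) from
        blockOf_congr (by rw [gval_neg f hkey0, h0', neg_zero])]
      exact h5
    · intro B C habs
      obtain ⟨hB1, hB2, hB3, hB4, hB5⟩ := keyfacts B
      obtain ⟨hC1, hC2, hC3, hC4, hC5⟩ := keyfacts C
      have habs' : |gval f (bkey B.1)| = |gval f (bkey C.1)| := habs
      rcases abs_eq_abs.1 habs' with h | h
      · refine Subtype.ext ?_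
        rw [← hB5, ← hC5]
        exact blockOf_congr h
      · exfalso
        have hc0 : bkey C.1 ≠ 0 := (mem_pmSet.1 hC4).1
        have hBC : B.1 = negBlock C.1 := by
          rw [← hB5, ← hC5, negBlock_blockOf hc0]
          apply blockOf_congr
          rw [gval_neg f hc0]
          omega
        have hkeq : bkey B.1 = bkey C.1 := by
          rw [hBC, bkey_negBlock]
        have hBkeyC : bkey C.1 ∈ B.1 := by rw [← hkeq]; exact hB3
        have : B.1 = C.1 := block_unique hπ' hB1 hC1 hBkeyC hC3
        rw [this] at hBC
        exact hC2 hBC.symm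
  · intro d hd
    exact Finset.mem_filter.2 ⟨Fintype.mem_piFinset.2 (fun i =>
      Fintype.mem_piFinset.1 (fOf_mem hπ hd) i), Phi_fOf hπ hd⟩
  · -- left inverse
    intro f hf
    obtain ⟨hfF, hfπ⟩ := Finset.mem_filter.1 hf
    subst hfπ
    funext i
    have hxpm : ((i : ℤ) + 1) ∈ pmSet n := by
      rw [mem_pmSet]; have := i.isLt; omega
    obtain ⟨B, hB, hxB⟩ := exists_block (Phi_isBn f) hxpm
    show cval (Phi n f) _ ((i : ℤ) + 1) = f i
    rw [cval_eq (Phi_isBn f) hB hxB, ← gval_idx f i]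
    exact ddval_dOf f hB hxB
  · -- right inverse
    intro d hd
    funext B
    obtain ⟨hBπ, hne, hkey⟩ := Tset_mem_iff.1 B.2
    have hkeypm : bkey B.1 ∈ pmSet n := hπ.2.1 B.1 hBπ hkey
    show gval (fOf n π d) (bkey B.1) = d B
    rw [gval_fOf hπ hkeypm, cval_eq hπ hBπ hkey, ddval, dif_pos B.2]

end fiber

open Classical in
noncomputable def PnF (n : ℕ) : Finset (Finset (Finset ℤ)) :=
  ((pmSet n).powerset.powerset).filter (fun π => IsBnPartition n π)

lemma mem_PnF {n : ℕ} {π : Finset (Finset ℤ)} : π ∈ PnF n ↔ IsBnPartition n π := by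
  classical
  constructor
  · intro h; exact (Finset.mem_filter.1 h).2
  · intro h
    refine Finset.mem_filter.2 ⟨?_, h⟩
    rw [Finset.mem_powerset]
    intro B hB
    rw [Finset.mem_powerset]
    exact h.2.1 B hB

lemma L1 (n k : ℕ) :
    (2 * k + 1) ^ n
      = ∑ π ∈ PnF n, 2 ^ (Tset π).card * k.descFactorial (Tset π).card := by
  classical
  have hIcc : (Finset.Icc (-(k:ℤ)) k).card = 2 * k + 1 := by
    rw [Int.card_Icc]; omega
  have hcard : (Fintype.piFinset (fun _ : Fin n => Finset.Icc (-(k:ℤ)) k)).card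
      = (2 * k + 1) ^ n := by
    rw [Fintype.card_piFinset]
    simp [hIcc]
  rw [← hcard,
    Finset.card_eq_sum_card_fiberwise (f := Phi n) (t := PnF n)
      (fun f _ => mem_PnF.2 (Phi_isBn f))]
  refine Finset.sum_congr rfl (fun π hπ' => ?_)
  rw [fiber_card k (mem_PnF.1 hπ'), card_Dset]

end Stmt16Aux

/-- Benoumhani's formula for the Dowling number: the number of `Bₙ`-partitions is
`|Πₙᴮ| = (1/√e) Σ_{k≥0} (2k+1)ⁿ/(2k)!!`. -/
theorem stmt16 (n : ℕ) (hn : 1 ≤ n) :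
    Summable (fun k : ℕ => ((2 * k + 1 : ℕ) : ℝ) ^ n / ((2 : ℝ) ^ k * k.factorial)) ∧
    (Set.ncard {π : Finset (Finset ℤ) | IsBnPartition n π} : ℝ)
      = (1 / Real.sqrt (Real.exp 1))
        * ∑' k : ℕ, ((2 * k + 1 : ℕ) : ℝ) ^ n / ((2 : ℝ) ^ k * k.factorial) := by
  classical
  have hexp : HasSum (fun m : ℕ => ((1:ℝ)/2) ^ m / m.factorial) (Real.exp (1/2)) := by
    have h1 := (Real.summable_pow_div_factorial ((1:ℝ)/2)).hasSum
    have h2 : ∑' m : ℕ, ((1:ℝ)/2) ^ m / m.factorial = Real.exp (1/2) := by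
      rw [Real.exp_eq_exp_ℝ, NormedSpace.exp_eq_tsum_div]
    rwa [h2] at h1
  have hg : ∀ jj : ℕ, HasSum
      (fun k : ℕ => (Nat.descFactorial k jj : ℝ) / ((2:ℝ) ^ k * k.factorial))
      (((1:ℝ)/2) ^ jj * Real.exp (1/2)) := by
    intro jj
    have heq : ∀ m : ℕ, (Nat.descFactorial (m + jj) jj : ℝ)
        / ((2:ℝ) ^ (m + jj) * (m + jj).factorial)
        = ((1:ℝ)/2) ^ jj * (((1:ℝ)/2) ^ m / m.factorial) := by
      intro m
      have h0 := Nat.factorial_mul_descFactorial (Nat.le_add_left jj m)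
      rw [Nat.add_sub_cancel] at h0
      have h1 : (m.factorial : ℝ) * (Nat.descFactorial (m + jj) jj : ℝ)
          = ((m + jj).factorial : ℝ) := by exact_mod_cast congrArg Nat.cast h0
      have hf0 : (m.factorial : ℝ) ≠ 0 := Nat.cast_ne_zero.2 m.factorial_ne_zero
      have hf1 : ((m + jj).factorial : ℝ) ≠ 0 := Nat.cast_ne_zero.2 (m + jj).factorial_ne_zero
      have h2 : (Nat.descFactorial (m + jj) jj : ℝ) = ((m + jj).factorial : ℝ) / m.factorial := by
        rw [eq_div_iff hf0]
        rw [mul_comm] at h1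
        exact h1
      rw [h2]
      rw [pow_add]
      simp only [one_div, inv_pow]
      field_simp
    have hshift : HasSum (fun m : ℕ => (Nat.descFactorial (m + jj) jj : ℝ)
        / ((2:ℝ) ^ (m + jj) * (m + jj).factorial)) (((1:ℝ)/2) ^ jj * Real.exp (1/2)) := by
      rw [funext heq]
      exact hexp.mul_left _
    have hzero : ∑ i ∈ Finset.range jj,
        (Nat.descFactorial i jj : ℝ) / ((2:ℝ) ^ i * i.factorial) = 0 := by
      apply Finset.sum_eq_zero
      intro i hi
      rw [Finset.mem_range] at hi
      rw [Nat.descFactorial_eq_zero_iff_lt.2 hi]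
      simp
    refine (hasSum_nat_add_iff' jj).1 ?_
    rw [hzero, sub_zero]
    exact hshift
  have hFsum : ∀ jj : ℕ, HasSum
      (fun k : ℕ => (2:ℝ) ^ jj * ((Nat.descFactorial k jj : ℝ) / ((2:ℝ) ^ k * k.factorial)))
      (Real.exp (1/2)) := by
    intro jj
    have h := (hg jj).mul_left ((2:ℝ) ^ jj)
    have hval : (2:ℝ) ^ jj * (((1:ℝ)/2) ^ jj * Real.exp (1/2)) = Real.exp (1/2) := by
      rw [← mul_assoc, ← mul_pow]
      norm_num
    rwa [hval] at h
  have hkey : ∀ k : ℕ, ((2 * k + 1 : ℕ) : ℝ) ^ n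
      = ∑ π ∈ Stmt16Aux.PnF n,
          (2:ℝ) ^ (Stmt16Aux.Tset π).card * (Nat.descFactorial k (Stmt16Aux.Tset π).card : ℝ) := by
    intro k
    have := Stmt16Aux.L1 n k
    exact_mod_cast congrArg (Nat.cast : ℕ → ℝ) this
  have hfun : (fun k : ℕ => ((2 * k + 1 : ℕ) : ℝ) ^ n / ((2:ℝ) ^ k * k.factorial))
      = fun k : ℕ => ∑ π ∈ Stmt16Aux.PnF n, (2:ℝ) ^ (Stmt16Aux.Tset π).card
          * ((Nat.descFactorial k (Stmt16Aux.Tset π).card : ℝ) / ((2:ℝ) ^ k * k.factorial)) := by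
    funext k
    rw [hkey k, Finset.sum_div]
    exact Finset.sum_congr rfl (fun π _ => mul_div_assoc _ _ _)
  have hTot : HasSum (fun k : ℕ => ∑ π ∈ Stmt16Aux.PnF n, (2:ℝ) ^ (Stmt16Aux.Tset π).card
      * ((Nat.descFactorial k (Stmt16Aux.Tset π).card : ℝ) / ((2:ℝ) ^ k * k.factorial)))
      (∑ π ∈ Stmt16Aux.PnF n, Real.exp (1/2)) :=
    hasSum_sum (fun π _ => hFsum _)
  constructor
  · rw [hfun]
    exact hTot.summable
  · have hset : {π : Finset (Finset ℤ) | IsBnPartition n π} = ↑(Stmt16Aux.PnF n) := by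
      ext π
      simp only [Set.mem_setOf_eq, Finset.coe_sort_coe, Finset.mem_coe]
      exact (Stmt16Aux.mem_PnF).symm
    rw [hset, Set.ncard_coe_finset, hfun, hTot.tsum_eq, Finset.sum_const, nsmul_eq_mul]
    have hsqrt : Real.sqrt (Real.exp 1) = Real.exp (1/2) := by
      have h : Real.exp 1 = Real.exp (1/2) * Real.exp (1/2) := by
        rw [← Real.exp_add]
        norm_num
      rw [h, Real.sqrt_mul_self (Real.exp_pos _).le]
    rw [hsqrt]
    have he : Real.exp (1/2) ≠ 0 := Real.exp_ne_zero _
    field_simp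
end
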